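/- arXiv:1409.7299 — 8 statements merged into one kernel-verified Lean document; each statement's English description precedes it below -/
import Mathlib

section
/- If S is a coconvex subset of R⁺ which is not a lower order ideal in dominance order, then there exists a root α ∈ S such that the Peterson translate τ(S, α) is not equal to S. -/
open scoped RealInnerProductSpace
set_option linter.unusedSectionVars false
set_option linter.unusedVariables false

variable {V : Type*} [NormedAddCommGroup V] [InnerProductSpace ℝ V]

/-- A finite crystallographic root system with a choice of positive and simple roots. -/
structure RootSystemData (V : Type*) [NormedAddCommGroup V] [InnerProductSpace ℝ V] where
  roots : Set V
  pos : Set V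
  simple : Set V
  finite : roots.Finite
  zero_not_mem : (0 : V) ∉ roots
  neg_mem : ∀ α ∈ roots, -α ∈ roots
  crystallographic : ∀ α ∈ roots, ∀ β ∈ roots, ∃ n : ℤ, 2 * ⟪α, β⟫ = (n : ℝ) * ⟪α, α⟫
  reflect_mem : ∀ α ∈ roots, ∀ β ∈ roots, β - (2 * ⟪α, β⟫ / ⟪α, α⟫) • α ∈ roots
  pos_subset : pos ⊆ roots
  pos_total : ∀ α ∈ roots, α ∈ pos ∨ -α ∈ pos
  pos_not_both : ∀ α ∈ pos, -α ∉ pos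
  pos_add : ∀ α ∈ pos, ∀ β ∈ pos, α + β ∈ roots → α + β ∈ pos
  simple_subset : simple ⊆ pos
  simple_indep : LinearIndependent ℝ (fun s : simple => (s : V))
  pos_nat_comb : ∀ α ∈ pos, ∃ c : V →₀ ℕ, ↑c.support ⊆ simple ∧
    α = c.sum fun v n => (n : ℝ) • v

/-- `S` is closed under sums that lie in `P` ("convex"). -/
def IsSumClosed (P S : Set V) : Prop :=
  ∀ ⦃a b : V⦄, a ∈ S → b ∈ S → a + b ∈ P → a + b ∈ S

/-- `S ⊆ P` is coconvex if its complement in `P` is convex. -/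
def IsCoconvex (P S : Set V) : Prop :=
  S ⊆ P ∧ IsSumClosed P (P \ S)

/-- `S ⊆ P` is biconvex if both it and its complement in `P` are convex. -/
def IsBiconvex (P S : Set V) : Prop :=
  S ⊆ P ∧ IsSumClosed P S ∧ IsSumClosed P (P \ S)

/-- `γ` and `δ` lie in the same `α`-string of `P`: they differ by an integer multiple
of `α` and all intermediate points lie in `P`. -/
def SameString (P : Set V) (α γ δ : V) : Prop :=
  γ ∈ P ∧ δ ∈ P ∧ ∃ k : ℤ, δ = γ + k • α ∧
    ∀ j : ℤ, min 0 k ≤ j → j ≤ max 0 k → γ + j • α ∈ P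

/-- The Peterson translate `τ(S, α)` of `S ⊆ P` along `α`: on each `α`-string of `P`,
the `r` elements of `S` are replaced by the bottom `r` elements of the string. -/
def PetersonTranslate (P S : Set V) (α : V) : Set V :=
  {x | ∃ δ : V, δ ∈ P ∧ δ - α ∉ P ∧ ∃ k : ℕ, x = δ + (k : ℤ) • α ∧
        k < (S ∩ {γ | SameString P α δ γ}).ncard}

/-- Dominance order: `α ⪯ β` iff `β - α` is a non-negative combination of simple roots `Δ`. -/
def Dominates (Delta : Set V) (α β : V) : Prop :=
  ∃ c : V →₀ ℝ, ↑c.support ⊆ Delta ∧ (∀ v, 0 ≤ c v) ∧ β - α = c.sum fun v r => r • v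

/-- A lower order ideal of the positive roots in dominance order. -/
def IsLowerOrderIdeal (pos Delta S : Set V) : Prop :=
  S ⊆ pos ∧ ∀ β ∈ S, ∀ α ∈ pos, Dominates Delta α β → α ∈ S

/-- The reflection through the hyperplane orthogonal to `α` (the identity if `α = 0`). -/
noncomputable def reflLin (α : V) : V ≃ₗ[ℝ] V := by
  classical
  exact if h : α = (0 : V) then LinearEquiv.refl ℝ V
  else
    Module.reflection (f := (2 / ⟪α, α⟫) • ((innerSL ℝ α : V →L[ℝ] ℝ) : V →ₗ[ℝ] ℝ)) (x := α)
      (by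
        have h0 : ⟪α, α⟫ ≠ 0 := inner_self_ne_zero.mpr h
        simp only [LinearMap.smul_apply, ContinuousLinearMap.coe_coe, innerSL_apply_apply,
          smul_eq_mul]
        field_simp)

/-- The Weyl group of a set of roots, as a group of linear automorphisms. -/
noncomputable def WeylGroup (R : Set V) : Subgroup (V ≃ₗ[ℝ] V) :=
  Subgroup.closure ((fun α => reflLin α) '' R)

/-- The inversion set `I(w) = {α ∈ R⁺ : w⁻¹ α ∈ R⁻}`. -/
def inversionSet (pos : Set V) (w : V ≃ₗ[ℝ] V) : Set V :=
  {α ∈ pos | -(w.symm α) ∈ pos}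



section AuxPT


/-- abbreviation for linear combination map -/
noncomputable def auxLC : (V →₀ ℝ) →ₗ[ℝ] V := Finsupp.linearCombination ℝ (id : V → V)

lemma auxLC_apply (c : V →₀ ℝ) : auxLC c = c.sum fun v r => r • v := by
  simp [auxLC, Finsupp.linearCombination_apply]

noncomputable def auxToR (a : V →₀ ℕ) : V →₀ ℝ := a.mapRange (Nat.cast) Nat.cast_zero

lemma auxToR_apply (a : V →₀ ℕ) (v : V) : auxToR a v = (a v : ℝ) := rfl

lemma auxLC_toR (a : V →₀ ℕ) : auxLC (auxToR a) = a.sum fun v n => (n : ℝ) • v := by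
  rw [auxLC_apply, auxToR, Finsupp.sum_mapRange_index (by simp)]

lemma auxToR_support {Δ : Set V} (a : V →₀ ℕ) (h : ↑a.support ⊆ Δ) :
    ↑(auxToR a).support ⊆ Δ := fun v hv => h (Finsupp.support_mapRange hv)

lemma auxToR_add (a b : V →₀ ℕ) : auxToR (a + b) = auxToR a + auxToR b :=
  Finsupp.mapRange_add (by push_cast; exact fun _ _ => rfl) a b

lemma aux_supp_add {Δ : Set V} {c e : V →₀ ℝ} (hc : ↑c.support ⊆ Δ) (he : ↑e.support ⊆ Δ) :
    ↑(c + e).support ⊆ Δ := by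
  classical
  intro v hv
  rcases Finset.mem_union.mp (Finsupp.support_add (Finset.mem_coe.mp hv)) with h | h
  · exact hc h
  · exact he h

lemma aux_supp_sub {Δ : Set V} {c e : V →₀ ℝ} (hc : ↑c.support ⊆ Δ) (he : ↑e.support ⊆ Δ) :
    ↑(c - e).support ⊆ Δ := by
  classical
  intro v hv
  rcases Finset.mem_union.mp (Finsupp.support_sub (Finset.mem_coe.mp hv)) with h | h
  · exact hc h
  · exact he h

lemma aux_lc_zero (RS : RootSystemData V) (c : V →₀ ℝ)
    (hsupp : ↑c.support ⊆ RS.simple) (h : auxLC c = 0) : c = 0 :=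
  (linearIndepOn_iff.mp (linearIndependent_subtype_iff.mp RS.simple_indep)) c ((Finsupp.mem_supported ℝ c).mpr hsupp) h

lemma aux_coeff_eq (RS : RootSystemData V) (c e : V →₀ ℝ)
    (hc : ↑c.support ⊆ RS.simple) (he : ↑e.support ⊆ RS.simple)
    (h : auxLC c = auxLC e) : c = e := by
  have h0 : auxLC (c - e) = 0 := by rw [map_sub, h, sub_self]
  have := aux_lc_zero RS _ (aux_supp_sub hc he) h0
  exact sub_eq_zero.mp this

lemma aux_rep (RS : RootSystemData V) {α : V} (hα : α ∈ RS.pos) :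
    ∃ a : V →₀ ℕ, ↑a.support ⊆ RS.simple ∧ α = auxLC (auxToR a) := by
  obtain ⟨a, h1, h2⟩ := RS.pos_nat_comb α hα
  exact ⟨a, h1, by rw [auxLC_toR]; exact h2⟩

lemma aux_inner_self_pos {x : V} (hx : x ≠ 0) : 0 < ⟪x, x⟫ := by
  rw [real_inner_self_eq_norm_sq]
  exact pow_pos (norm_pos_iff.mpr hx) 2

lemma aux_sub_root (RS : RootSystemData V) {α β : V} (hα : α ∈ RS.roots)
    (hβ : β ∈ RS.roots) (hip : 0 < ⟪α, β⟫) (hne : α ≠ β) : β - α ∈ RS.roots := by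
  have hα0 : α ≠ 0 := fun h => RS.zero_not_mem (h ▸ hα)
  have hβ0 : β ≠ 0 := fun h => RS.zero_not_mem (h ▸ hβ)
  have hA : 0 < ⟪α, α⟫ := aux_inner_self_pos hα0
  have hB : 0 < ⟪β, β⟫ := aux_inner_self_pos hβ0
  obtain ⟨n, hn⟩ := RS.crystallographic α hα β hβ
  obtain ⟨m, hm⟩ := RS.crystallographic β hβ α hα
  rw [real_inner_comm α β] at hm
  have hn1 : 1 ≤ n := by
    have : (0:ℝ) < (n:ℝ) := by nlinarith
    exact_mod_cast this
  have hm1 : 1 ≤ m := by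
    have : (0:ℝ) < (m:ℝ) := by nlinarith
    exact_mod_cast this
  rcases eq_or_lt_of_le hn1 with h1 | h1
  · have hco : (2 * ⟪α, β⟫ / ⟪α, α⟫) = 1 := by
      rw [hn, ← h1]; push_cast; field_simp
    have := RS.reflect_mem α hα β hβ
    rwa [hco, one_smul] at this
  rcases eq_or_lt_of_le hm1 with h2 | h2
  · have hco : (2 * ⟪β, α⟫ / ⟪β, β⟫) = 1 := by
      rw [real_inner_comm α β, hm, ← h2]; push_cast; field_simp
    have := RS.reflect_mem β hβ α hα
    rw [hco, one_smul] at this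
    have := RS.neg_mem _ this
    rwa [neg_sub] at this
  exfalso
  have hcs : ⟪α, β⟫ * ⟪α, β⟫ ≤ ⟪α, α⟫ * ⟪β, β⟫ := real_inner_mul_inner_self_le α β
  have hn2 : (2:ℤ) ≤ n := h1
  have hm2 : (2:ℤ) ≤ m := h2
  have hn2' : (2:ℝ) ≤ (n:ℝ) := by exact_mod_cast hn2
  have hm2' : (2:ℝ) ≤ (m:ℝ) := by exact_mod_cast hm2
  -- 4 ip^2 = n m A B ≥ 4 A B ≥ 4 ip^2, forcing n = m = 2 and ip = A = B
  have h4 : (n:ℝ) * (m:ℝ) * (⟪α, α⟫ * ⟪β, β⟫) = 4 * (⟪α, β⟫ * ⟪α, β⟫) := by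
    linear_combination (-(m:ℝ) * ⟪β, β⟫) * hn + (-(2 * ⟪α, β⟫)) * hm
  have hABpos : 0 < ⟪α, α⟫ * ⟪β, β⟫ := mul_pos hA hB
  have hprod : (n:ℝ) * (m:ℝ) ≤ 4 := by nlinarith
  have hsum4 : (n:ℝ) + (m:ℝ) ≤ 4 := by
    nlinarith [mul_nonneg (by linarith : (0:ℝ) ≤ (n:ℝ) - 2) (by linarith : (0:ℝ) ≤ (m:ℝ) - 2)]
  have key1 : (n:ℝ) = 2 := by linarith
  have key2 : (m:ℝ) = 2 := by linarith
  rw [key1] at hn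
  rw [key2] at hm
  have hipA : ⟪α, β⟫ = ⟪α, α⟫ := by linarith
  have hipB : ⟪α, β⟫ = ⟪β, β⟫ := by linarith
  have hz : ⟪β - α, β - α⟫ = 0 := by
    rw [inner_sub_left, inner_sub_right, inner_sub_right, real_inner_comm α β]
    linarith
  have : β - α = 0 := by
    by_contra hne0
    exact absurd hz (ne_of_gt (aux_inner_self_pos hne0))
  exact hne (sub_eq_zero.mp this).symm

lemma aux_drop {P S : Set V} {s x : V} (h : PetersonTranslate P S s = S)
    (hx : x ∈ P) (hxs : x + s ∈ S) : x ∈ S := by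
  rw [← h] at hxs ⊢
  obtain ⟨δ, hδ, hδ', k, hk, hklt⟩ := hxs
  cases k with
  | zero =>
      exfalso
      apply hδ'
      have hxd : x + s = δ := by simpa using hk
      have : δ - s = x := by rw [← hxd]; abel
      rwa [this]
  | succ k =>
      refine ⟨δ, hδ, hδ', k, ?_, lt_trans (Nat.lt_succ_self k) hklt⟩
      have hsplit : ((k + 1 : ℕ) : ℤ) • s = ((k : ℕ) : ℤ) • s + s := by
        push_cast
        rw [add_smul, one_smul]
      rw [hsplit, ← add_assoc] at hk
      exact add_right_cancel hk

lemma aux_nat_zero_of (RS : RootSystemData V) {a : V →₀ ℕ}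
    (ha : ↑a.support ⊆ RS.simple) (h : ∀ v, (a v : ℝ) = 0) : auxLC (auxToR a) = 0 := by
  have : auxToR a = 0 := by ext v; exact h v
  rw [this, map_zero]

lemma aux_key (RS : RootSystemData V) (S : Set V) (hcc : IsCoconvex RS.pos S)
    (hfix : ∀ γ ∈ S, PetersonTranslate RS.pos S γ = S) :
    ∀ n : ℕ, ∀ d : V →₀ ℕ, (d.sum fun _ k => k) = n → ↑d.support ⊆ RS.simple →
      ∀ β ∈ S, ∀ α ∈ RS.pos, β - α = auxLC (auxToR d) → α ∈ S := by
  intro n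
  induction n using Nat.strong_induction_on with
  | _ n IH =>
    intro d hdn hdsupp β hβ α hα hba
    by_cases hab : α = β
    · rwa [hab]
    have hβpos : β ∈ RS.pos := hcc.1 hβ
    have hβroot : β ∈ RS.roots := RS.pos_subset hβpos
    have hαroot : α ∈ RS.roots := RS.pos_subset hα
    have hsub0 : β - α ≠ 0 := sub_ne_zero.mpr (fun h => hab h.symm)
    have hpos : 0 < ⟪β - α, β - α⟫ := aux_inner_self_pos hsub0
    have hexp : ⟪β - α, β - α⟫ = ∑ v ∈ d.support, (d v : ℝ) * ⟪v, β - α⟫ := by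
      have h1 : β - α = ∑ v ∈ d.support, (d v : ℝ) • v := by
        rw [hba, auxLC_toR]; rfl
      nth_rewrite 1 [h1]
      rw [sum_inner]
      refine Finset.sum_congr rfl fun v hv => ?_
      rw [real_inner_smul_left]
    have hex : ∃ s ∈ d.support, 0 < ⟪s, β - α⟫ := by
      by_contra hcon
      push_neg at hcon
      have hle : ∑ v ∈ d.support, (d v : ℝ) * ⟪v, β - α⟫ ≤ 0 :=
        Finset.sum_nonpos fun v hv =>
          mul_nonpos_of_nonneg_of_nonpos (Nat.cast_nonneg _) (hcon v hv)
      rw [hexp] at hpos; linarith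
    obtain ⟨s, hsmem, hsip⟩ := hex
    have hssimple : s ∈ RS.simple := hdsupp hsmem
    have hspos : s ∈ RS.pos := RS.simple_subset hssimple
    have hsroot : s ∈ RS.roots := RS.pos_subset hspos
    have hds : 1 ≤ d s := Nat.one_le_iff_ne_zero.mpr (Finsupp.mem_support_iff.mp hsmem)
    classical
    set d' : V →₀ ℕ := d - Finsupp.single s 1 with hd'def
    have hdd : d' + Finsupp.single s 1 = d := by
      ext v
      by_cases hv : v = s
      · subst hv
        simp [hd'def, Finsupp.tsub_apply, Nat.sub_add_cancel hds]
      · simp [hd'def, Finsupp.tsub_apply, Finsupp.single_apply, if_neg (Ne.symm hv)]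
    have hd'supp : ↑d'.support ⊆ RS.simple := by
      intro v hv
      have h1 : d' v ≠ 0 := Finsupp.mem_support_iff.mp hv
      have h2 : d v ≠ 0 := by
        intro h
        apply h1
        have : d' v ≤ d v := by
          rw [hd'def, Finsupp.tsub_apply]; omega
        omega
      exact hdsupp (Finsupp.mem_support_iff.mpr h2)
    have hLC : auxLC (auxToR d) = auxLC (auxToR d') + s := by
      conv_lhs => rw [← hdd]
      rw [auxToR_add, map_add]
      congr 1
      rw [auxToR, Finsupp.mapRange_single]
      simp [auxLC, Finsupp.linearCombination_single]
    have hsum : (d'.sum fun _ k => k) + 1 = n := by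
      rw [← hdn]
      conv_rhs => rw [← hdd]
      rw [Finsupp.sum_add_index' (fun _ => rfl) (fun _ _ _ => rfl)]
      rw [Finsupp.sum_single_index rfl]
    have hmlt : (d'.sum fun _ k => k) < n := by omega
    have hcases : 0 < ⟪s, β⟫ ∨ ⟪s, α⟫ < 0 := by
      rw [inner_sub_right] at hsip
      by_contra h
      push_neg at h
      linarith [h.1, h.2]
    rcases hcases with hsb | hsa
    · -- case ⟪s, β⟫ > 0 : descend from β to β - s
      have hβs : β ≠ s := by
        rintro rfl
        obtain ⟨a, hasupp, ha⟩ := aux_rep RS hα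
        have hsum2 : auxLC (auxToR a + auxToR d) = auxLC (Finsupp.single β (1 : ℝ)) := by
          rw [map_add, ← ha, ← hba]
          simp [auxLC, Finsupp.linearCombination_single]
        have heq : auxToR a + auxToR d = Finsupp.single β (1 : ℝ) := by
          refine aux_coeff_eq RS _ _ ?_ ?_ hsum2
          · exact aux_supp_add (auxToR_support a hasupp) (auxToR_support d hdsupp)
          · intro v hv
            have := Finsupp.support_single_subset (Finset.mem_coe.mp hv)
            rw [Finset.mem_singleton] at this
            rw [this]; exact hssimple
        have hzero : ∀ v, (a v : ℝ) = 0 := by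
          intro v
          have hveq := DFunLike.congr_fun heq v
          rw [Finsupp.add_apply, Finsupp.single_apply] at hveq
          have h1 : (auxToR a) v = (a v : ℝ) := rfl
          have h2 : (auxToR d) v = (d v : ℝ) := rfl
          rw [h1, h2] at hveq
          have han : (0:ℝ) ≤ (a v : ℝ) := Nat.cast_nonneg _
          have hdn' : (0:ℝ) ≤ (d v : ℝ) := Nat.cast_nonneg _
          by_cases hv : β = v
          · subst hv
            rw [if_pos rfl] at hveq
            have hd1 : (1 : ℝ) ≤ (d β : ℝ) := by exact_mod_cast hds
            linarith
          · rw [if_neg hv] at hveq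
            linarith
        have : α = 0 := by rw [ha, aux_nat_zero_of RS hasupp hzero]
        exact RS.zero_not_mem (this ▸ hαroot)
      have hroot : β - s ∈ RS.roots := aux_sub_root RS hsroot hβroot hsb (Ne.symm hβs)
      have hbspos : β - s ∈ RS.pos := by
        rcases RS.pos_total _ hroot with h | h
        · exact h
        · exfalso
          rw [neg_sub] at h
          obtain ⟨e, hesupp, he⟩ := aux_rep RS h
          obtain ⟨b, hbsupp, hb⟩ := aux_rep RS hβpos
          have hsum2 : auxLC (auxToR e + auxToR b) = auxLC (Finsupp.single s (1 : ℝ)) := by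
            rw [map_add, ← he, ← hb]
            simp [auxLC, Finsupp.linearCombination_single]
          have heq : auxToR e + auxToR b = Finsupp.single s (1 : ℝ) := by
            refine aux_coeff_eq RS _ _ ?_ ?_ hsum2
            · exact aux_supp_add (auxToR_support e hesupp) (auxToR_support b hbsupp)
            · intro v hv
              have := Finsupp.support_single_subset (Finset.mem_coe.mp hv)
              rw [Finset.mem_singleton] at this
              rw [this]; exact hssimple
          have hbv : ∀ v, v ≠ s → b v = 0 := by
            intro v hv
            have hveq := DFunLike.congr_fun heq v
            rw [Finsupp.add_apply, Finsupp.single_apply, if_neg (Ne.symm hv)] at hveq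
            have he1 : (auxToR e) v = (e v : ℝ) := rfl
            have he2 : (auxToR b) v = (b v : ℝ) := rfl
            rw [he1, he2] at hveq
            have h1 : (0:ℝ) ≤ (e v : ℝ) := Nat.cast_nonneg _
            have h2 : (0:ℝ) ≤ (b v : ℝ) := Nat.cast_nonneg _
            have : (b v : ℝ) = 0 := by linarith
            exact_mod_cast this
          have hbs1 : b s ≤ 1 := by
            have hveq := DFunLike.congr_fun heq s
            rw [Finsupp.add_apply, Finsupp.single_apply, if_pos rfl] at hveq
            have he1 : (auxToR e) s = (e s : ℝ) := rfl
            have he2 : (auxToR b) s = (b s : ℝ) := rfl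
            rw [he1, he2] at hveq
            have h1 : (0:ℝ) ≤ (e s : ℝ) := Nat.cast_nonneg _
            have : (b s : ℝ) ≤ 1 := by linarith
            exact_mod_cast this
          have hbsingle : b = Finsupp.single s (b s) := by
            ext v
            by_cases hv : v = s
            · subst hv; simp
            · rw [Finsupp.single_apply, if_neg (fun h => hv h.symm), hbv v hv]
          have hβval : β = (b s : ℝ) • s := by
            rw [hb, hbsingle]
            rw [auxToR, Finsupp.mapRange_single]
            simp [auxLC, Finsupp.linearCombination_single]
          rcases Nat.le_one_iff_eq_zero_or_eq_one.mp hbs1 with h0 | h1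
          · rw [h0] at hβval
            simp only [Nat.cast_zero, zero_smul] at hβval
            exact RS.zero_not_mem (hβval ▸ hβroot)
          · rw [h1] at hβval
            simp only [Nat.cast_one, one_smul] at hβval
            exact hβs hβval
      have hbsS : β - s ∈ S := by
        by_cases hsS : s ∈ S
        · exact aux_drop (hfix s hsS) hbspos (by rwa [sub_add_cancel])
        · by_contra hns
          have hmem : β ∈ RS.pos \ S := by
            have := hcc.2 ⟨hbspos, hns⟩ ⟨hspos, hsS⟩
              (by rw [sub_add_cancel]; exact hβpos)
            rwa [sub_add_cancel] at this
          exact hmem.2 hβ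
      refine IH _ hmlt d' rfl hd'supp (β - s) hbsS α hα ?_
      have : β - s - α = β - α - s := by abel
      rw [this, hba, hLC]
      abel
    · -- case ⟪s, α⟫ < 0 : ascend from α to α + s
      have hnsroot : -s ∈ RS.roots := RS.neg_mem s hsroot
      have hip : 0 < ⟪-s, α⟫ := by rw [inner_neg_left]; linarith
      have hne : -s ≠ α := by
        intro h
        have : -α = s := by rw [← h, neg_neg]
        exact RS.pos_not_both α hα (this ▸ hspos)
      have hroot : α - -s ∈ RS.roots := aux_sub_root RS hnsroot hαroot hip hne
      rw [sub_neg_eq_add] at hroot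
      have haspos : α + s ∈ RS.pos := RS.pos_add α hα s hspos hroot
      have hasS : α + s ∈ S := by
        refine IH _ hmlt d' rfl hd'supp β hβ (α + s) haspos ?_
        have : β - (α + s) = β - α - s := by abel
        rw [this, hba, hLC]
        abel
      by_cases hsS : s ∈ S
      · exact aux_drop (hfix s hsS) hα hasS
      · by_contra hns
        have := hcc.2 ⟨hα, hns⟩ ⟨hspos, hsS⟩ haspos
        exact this.2 hasS

end AuxPT

/-- A coconvex set which is not a lower order ideal admits a nontrivial
Peterson translate. -/
theorem exists_nontrivial_petersonTranslate
    (RS : RootSystemData V) (S : Set V)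
    (hS : IsCoconvex RS.pos S)
    (hnot : ¬ IsLowerOrderIdeal RS.pos RS.simple S) :
    ∃ α ∈ S, PetersonTranslate RS.pos S α ≠ S := by
  classical
  by_contra hcon
  push_neg at hcon
  apply hnot
  refine ⟨hS.1, ?_⟩
  intro β hβ α hα hdom
  obtain ⟨c, hcsupp, hcnn, hcsum⟩ := hdom
  obtain ⟨a, hasupp, ha⟩ := aux_rep RS hα
  obtain ⟨b, hbsupp, hb⟩ := aux_rep RS (hS.1 hβ)
  have hLCc : auxLC c = β - α := by rw [auxLC_apply]; exact hcsum.symm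
  have hkey : auxToR b - auxToR a = c := by
    refine aux_coeff_eq RS _ _ (aux_supp_sub (auxToR_support b hbsupp) (auxToR_support a hasupp))
      hcsupp ?_
    rw [map_sub, ← ha, ← hb, hLCc]
  have hle : ∀ v, a v ≤ b v := by
    intro v
    have hveq := DFunLike.congr_fun hkey v
    rw [Finsupp.sub_apply] at hveq
    have h1 : (auxToR b) v = (b v : ℝ) := rfl
    have h2 : (auxToR a) v = (a v : ℝ) := rfl
    rw [h1, h2] at hveq
    have := hcnn v
    have : (a v : ℝ) ≤ (b v : ℝ) := by linarith
    exact_mod_cast this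
  set d : V →₀ ℕ := b - a with hddef
  have hdsupp : ↑d.support ⊆ RS.simple := by
    intro v hv
    have h1 : d v ≠ 0 := Finsupp.mem_support_iff.mp hv
    have h2 : b v ≠ 0 := by
      intro h
      apply h1
      rw [hddef, Finsupp.tsub_apply, h]
      omega
    exact hbsupp (Finsupp.mem_support_iff.mpr h2)
  have htoR : auxToR d = c := by
    ext v
    rw [← hkey, Finsupp.sub_apply]
    have h1 : (auxToR d) v = (d v : ℝ) := rfl
    have h2 : (auxToR b) v = (b v : ℝ) := rfl
    have h3 : (auxToR a) v = (a v : ℝ) := rfl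
    rw [h1, h2, h3, hddef, Finsupp.tsub_apply]
    push_cast [Nat.cast_sub (hle v)]
    ring
  exact aux_key RS S hS hcon (d.sum fun _ k => k) d rfl hdsupp β hβ α hα
    (by rw [htoR, hLCc])
end

section
/- Peterson translation is local: if S ⊆ R⁺, U is a linear subspace of the ambient space containing α, and S_U = S ∩ U, R_U = R ∩ U, then τ(S, α) ∩ U = τ(S_U, α), where the translate on the right is computed in the root system R_U with positive roots R⁺ ∩ U. -/
open scoped RealInnerProductSpace

variable {V : Type*} [NormedAddCommGroup V] [InnerProductSpace ℝ V]

lemma string_inter_eq (P S : Set V) (α δ : V) (U : Submodule ℝ V)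
    (hαU : α ∈ U) (hδU : δ ∈ U) :
    S ∩ {γ | SameString P α δ γ} = (S ∩ ↑U) ∩ {γ | SameString (P ∩ ↑U) α δ γ} := by
  ext γ
  simp only [Set.mem_inter_iff, Set.mem_setOf_eq]
  constructor
  · rintro ⟨hγS, h1, h2, k, rfl, h3⟩
    have hmem : ∀ j : ℤ, δ + j • α ∈ U := fun j => U.add_mem hδU (zsmul_mem hαU j)
    exact ⟨⟨hγS, hmem k⟩, ⟨h1, hδU⟩, ⟨h2, hmem k⟩, k, rfl,
      fun j hj hj' => ⟨h3 j hj hj', hmem j⟩⟩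
  · rintro ⟨⟨hγS, _⟩, ⟨h1, _⟩, ⟨h2, _⟩, k, hk, h3⟩
    exact ⟨hγS, h1, h2, k, hk, fun j hj hj' => (h3 j hj hj').1⟩

/-- Peterson translation is local: for a subspace `U` containing `α`,
`τ(S, α) ∩ U = τ(S_U, α)`, the latter computed in the root system `R_U = R ∩ U` with
positive roots `R⁺ ∩ U`. -/
theorem petersonTranslate_local
    (RS : RootSystemData V) (S : Set V) (hS : S ⊆ RS.pos)
    (α : V) (hα : α ∈ RS.pos)
    (U : Submodule ℝ V) (hαU : α ∈ U) :
    PetersonTranslate RS.pos S α ∩ ↑U = PetersonTranslate (RS.pos ∩ ↑U) (S ∩ ↑U) α := by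
  classical
  ext x
  simp only [Set.mem_inter_iff, PetersonTranslate, Set.mem_setOf_eq]
  constructor
  · rintro ⟨⟨δ, hδP, hδα, k, rfl, hk⟩, hxU⟩
    have hδU : δ ∈ U := by
      have h := U.sub_mem hxU (zsmul_mem hαU k)
      simpa using h
    refine ⟨δ, ⟨hδP, hδU⟩, ?_, k, rfl, ?_⟩
    · rintro ⟨h, _⟩; exact hδα h
    · rwa [← string_inter_eq RS.pos S α δ U hαU hδU]
  · rintro ⟨δ, ⟨hδP, hδU⟩, hδα, k, rfl, hk⟩
    have hxU : δ + (k : ℤ) • α ∈ U := U.add_mem hδU (zsmul_mem hαU k)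
    refine ⟨⟨δ, hδP, ?_, k, rfl, ?_⟩, hxU⟩
    · intro h
      exact hδα ⟨h, U.sub_mem hδU hαU⟩
    · rwa [string_inter_eq RS.pos S α δ U hαU hδU]
end

section
/- If τ(S, α) ≠ S for a subset S ⊆ R⁺ and α ∈ R⁺, then the sum of the heights of the roots in τ(S, α) is strictly less than the sum of the heights of the roots in S. -/
open scoped RealInnerProductSpace

variable {V : Type*} [NormedAddCommGroup V] [InnerProductSpace ℝ V]

private lemma sum_range_card_le (T : Finset ℕ) :
    (∑ i ∈ Finset.range T.card, i) ≤ (∑ i ∈ T, i) ∧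
      ((∑ i ∈ Finset.range T.card, i) = (∑ i ∈ T, i) → T = Finset.range T.card) := by
  generalize hn : T.card = n
  induction n generalizing T with
  | zero =>
    have : T = ∅ := Finset.card_eq_zero.mp hn
    subst this; simp
  | succ n ih =>
    have hne : T.Nonempty := Finset.card_pos.mp (by omega)
    have hMem : T.max' hne ∈ T := T.max'_mem hne
    set M := T.max' hne with hM
    have hcard : (T.erase M).card = n := by
      simp [Finset.card_erase_of_mem hMem, hn]
    have hsub : T ⊆ Finset.range (M + 1) := fun x hx =>
      Finset.mem_range.mpr (Nat.lt_succ_of_le (Finset.le_max' T x hx))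
    have hMn : n ≤ M := by
      have := Finset.card_le_card hsub
      rw [hn, Finset.card_range] at this
      omega
    obtain ⟨hle, heq⟩ := ih (T.erase M) hcard
    have hsumT : (∑ i ∈ T, i) = M + ∑ i ∈ T.erase M, i := by
      rw [Finset.add_sum_erase T (fun i => i) hMem]
    have hsumR : (∑ i ∈ Finset.range (n+1), i) = n + ∑ i ∈ Finset.range n, i := by
      rw [Finset.sum_range_succ]; omega
    constructor
    · omega
    · intro h
      have h1 : n = M ∧ (∑ i ∈ Finset.range n, i) = ∑ i ∈ T.erase M, i := by omega
      have h2 := heq h1.2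
      have hT : T = insert M (T.erase M) := (Finset.insert_erase hMem).symm
      rw [hT, h2, ← h1.1, Finset.range_add_one]

private lemma add_zsmul_injective {α : V} (hα : α ≠ 0) (δ : V) :
    Function.Injective (fun k : ℤ => δ + k • α) := by
  intro k k' h
  simp only [add_right_inj] at h
  rw [← Int.cast_smul_eq_zsmul ℝ, ← Int.cast_smul_eq_zsmul ℝ] at h
  exact_mod_cast smul_left_injective ℝ hα h

private lemma add_nsmul_injective {α : V} (hα : α ≠ 0) (δ : V) :
    Function.Injective (fun k : ℕ => δ + (k : ℤ) • α) := by
  intro k k' h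
  have := add_zsmul_injective hα δ h
  exact_mod_cast this

private lemma chain_bound {P : Set V} (hP : P.Finite) {α : V} (hα : α ≠ 0) (δ : V) {k : ℕ}
    (h : ∀ j : ℕ, j ≤ k → δ + (j : ℤ) • α ∈ P) : k < hP.toFinset.card := by
  have hcard := Finset.card_le_card_of_injOn (fun j : ℕ => δ + (j : ℤ) • α)
    (s := Finset.range (k + 1)) (t := hP.toFinset)
    (fun j hj => hP.mem_toFinset.mpr (h j (by simpa using Nat.lt_succ_iff.mp (Finset.mem_range.mp hj))))
    ((add_nsmul_injective hα δ).injOn)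
  simpa using hcard

private lemma exists_bottom {P : Set V} (hP : P.Finite) {α : V} (hα : α ≠ 0) {x : V}
    (hx : x ∈ P) : ∃ δ : V, δ ∈ P ∧ δ - α ∉ P ∧ ∃ k : ℕ, x = δ + (k : ℤ) • α ∧
      ∀ j : ℕ, j ≤ k → δ + (j : ℤ) • α ∈ P := by
  classical
  have hex : ∃ n : ℕ, x - (n : ℤ) • α ∉ P := by
    by_contra h
    push_neg at h
    have hinj : Function.Injective (fun n : ℕ => x - (n : ℤ) • α) := by
      intro a b hab
      have h2 : x + (-(a : ℤ)) • α = x + (-(b : ℤ)) • α := by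
        simpa [sub_eq_add_neg, neg_smul] using hab
      have := add_zsmul_injective hα x h2
      omega
    exact (hP.subset (Set.range_subset_iff.mpr h)).not_infinite
      (Set.infinite_range_of_injective hinj)
  set n := Nat.find hex with hndef
  have hn : x - (n : ℤ) • α ∉ P := Nat.find_spec hex
  have hlt : ∀ m < n, x - (m : ℤ) • α ∈ P := fun m hm => not_not.mp (Nat.find_min hex hm)
  have hn0 : 0 < n := by
    rcases Nat.eq_zero_or_pos n with h | h
    · exfalso; apply hn; rw [h]; simpa using hx
    · exact h
  refine ⟨x - ((n - 1 : ℕ) : ℤ) • α, hlt _ (by omega), ?_, n - 1, ?_, ?_⟩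
  · have he : x - ((n - 1 : ℕ) : ℤ) • α - α = x - (n : ℤ) • α := by
      have hc : ((n - 1 : ℕ) : ℤ) = (n : ℤ) - 1 := by omega
      rw [hc, sub_smul, one_smul]; abel
    rw [he]; exact hn
  · abel
  · intro j hj
    have he : x - ((n - 1 : ℕ) : ℤ) • α + (j : ℤ) • α = x - ((n - 1 - j : ℕ) : ℤ) • α := by
      have hc : ((n - 1 - j : ℕ) : ℤ) = ((n - 1 : ℕ) : ℤ) - (j : ℤ) := by omega
      rw [hc, sub_smul]; abel
    rw [he]; exact hlt _ (by omega)

private lemma sameString_bottom {P : Set V} {α : V} {δ : V} (hδ : δ ∈ P)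
    (hδb : δ - α ∉ P) (γ : V) :
    SameString P α δ γ ↔
      ∃ k : ℕ, γ = δ + (k : ℤ) • α ∧ ∀ j : ℕ, j ≤ k → δ + (j : ℤ) • α ∈ P := by
  constructor
  · rintro ⟨-, hγP, k, hγ, hchain⟩
    have hk0 : 0 ≤ k := by
      by_contra h
      push_neg at h
      have h1 := hchain (-1) (by omega) (by omega)
      apply hδb
      simpa [sub_eq_add_neg] using h1
    refine ⟨k.toNat, by rw [hγ, Int.toNat_of_nonneg hk0], fun j hj => ?_⟩
    exact hchain j (by omega) (by omega)
  · rintro ⟨k, rfl, hchain⟩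
    refine ⟨hδ, hchain k le_rfl, (k : ℤ), rfl, fun j hj1 hj2 => ?_⟩
    have h0 : (0 : ℤ) ≤ j := by omega
    have := hchain j.toNat (by omega)
    rwa [Int.toNat_of_nonneg h0] at this

private lemma bottom_unique {P : Set V} {α : V} (hα : α ≠ 0) {δ δ' γ : V}
    (hδ : δ ∈ P) (hδb : δ - α ∉ P) (hδ' : δ' ∈ P) (hδb' : δ' - α ∉ P)
    (h1 : SameString P α δ γ) (h2 : SameString P α δ' γ) : δ = δ' := by
  rw [sameString_bottom hδ hδb] at h1
  rw [sameString_bottom hδ' hδb'] at h2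
  obtain ⟨k, hk, hc⟩ := h1
  obtain ⟨k', hk', hc'⟩ := h2
  have heq : δ + (k : ℤ) • α = δ' + (k' : ℤ) • α := by rw [← hk, ← hk']
  clear hk hk'
  wlog hkk : k ≤ k' generalizing δ δ' k k'
  · exact (this hδ' hδb' hδ hδb k' hc' k hc heq.symm (by omega)).symm
  rcases Nat.eq_or_lt_of_le hkk with h | h
  · subst h
    exact add_right_cancel heq
  · exfalso
    apply hδb
    have hδeq : δ = δ' + ((k' : ℤ) - (k : ℤ)) • α := by
      have h3 := eq_sub_of_add_eq heq
      rw [h3, sub_smul]; abel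
    have he : δ - α = δ' + ((k' - k - 1 : ℕ) : ℤ) • α := by
      have hcst : ((k' - k - 1 : ℕ) : ℤ) = (k' : ℤ) - (k : ℤ) - 1 := by omega
      rw [hcst, hδeq, sub_smul, sub_smul, sub_smul, one_smul]
      abel
    rw [he]; exact hc' _ (by omega)


private lemma ht_pos (RS : RootSystemData V) (ht : V →ₗ[ℝ] ℝ)
    (hht : ∀ s ∈ RS.simple, ht s = 1) {α : V} (hα : α ∈ RS.pos) : 0 < ht α := by
  obtain ⟨c, hsupp, hrep⟩ := RS.pos_nat_comb α hα
  have hα0 : α ≠ 0 := fun h => RS.zero_not_mem (h ▸ RS.pos_subset hα)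
  have hc0 : c ≠ 0 := by
    rintro rfl
    rw [Finsupp.sum_zero_index] at hrep
    exact hα0 hrep
  have hval : ht α = ∑ v ∈ c.support, (c v : ℝ) := by
    rw [hrep, map_finsuppSum, Finsupp.sum]
    refine Finset.sum_congr rfl fun v hv => ?_
    rw [map_smul, smul_eq_mul, hht v (hsupp hv), mul_one]
  rw [hval]
  obtain ⟨v, hv⟩ := Finsupp.support_nonempty_iff.mpr hc0
  refine Finset.sum_pos' (fun i _ => by positivity) ⟨v, hv, ?_⟩
  have := Finsupp.mem_support_iff.mp hv
  exact_mod_cast Nat.pos_of_ne_zero this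

/-- If `τ(S, α) ≠ S`, then the total height of `τ(S, α)` is strictly less than
that of `S`.  Height is measured by any linear functional taking the value `1` on each
simple root. -/
theorem petersonTranslate_height_lt
    (RS : RootSystemData V)
    (ht : V →ₗ[ℝ] ℝ) (hht : ∀ s ∈ RS.simple, ht s = 1)
    (S : Set V) (hS : S ⊆ RS.pos) (α : V) (hα : α ∈ RS.pos)
    (hne : PetersonTranslate RS.pos S α ≠ S) :
    ∑ᶠ x ∈ PetersonTranslate RS.pos S α, ht x < ∑ᶠ x ∈ S, ht x := by
  classical
  have hPfin : RS.pos.Finite := RS.finite.subset RS.pos_subset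
  set P := RS.pos with hPdef
  have hα0 : α ≠ 0 := fun h => RS.zero_not_mem (h ▸ RS.pos_subset hα)
  have htα : 0 < ht α := ht_pos RS ht hht hα
  have hht' : ∀ (δ : V) (k : ℕ), ht (δ + (k : ℤ) • α) = ht δ + (k : ℝ) * ht α := by
    intro δ k
    rw [map_add, ← Int.cast_smul_eq_zsmul ℝ, map_smul, smul_eq_mul]
    norm_num
  obtain ⟨T, hmemT⟩ : ∃ T : V → Finset ℕ, ∀ δ k, k ∈ T δ ↔
      (δ + (k : ℤ) • α ∈ S ∧ ∀ j : ℕ, j ≤ k → δ + (j : ℤ) • α ∈ P) := by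
    refine ⟨fun δ => (Finset.range (hPfin.toFinset.card + 1)).filter
      (fun k => δ + (k : ℤ) • α ∈ S ∧ ∀ j : ℕ, j ≤ k → δ + (j : ℤ) • α ∈ P),
      fun δ k => ?_⟩
    simp only [Finset.mem_filter, Finset.mem_range]
    refine ⟨fun h => h.2, fun h => ⟨?_, h⟩⟩
    have := chain_bound hPfin hα0 δ h.2
    omega
  have hsum_image : ∀ (δ : V) (A : Finset ℕ),
      (∑ x ∈ A.image (fun k : ℕ => δ + (k : ℤ) • α), ht x)
        = ∑ k ∈ A, (ht δ + (k : ℝ) * ht α) := by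
    intro δ A
    rw [Finset.sum_image (fun a _ b _ h => add_nsmul_injective hα0 δ h)]
    exact Finset.sum_congr rfl fun k _ => hht' δ k
  have hcard_image : ∀ (δ : V) (A : Finset ℕ),
      (A.image (fun k : ℕ => δ + (k : ℤ) • α)).card = A.card :=
    fun δ A => Finset.card_image_of_injective _ (add_nsmul_injective hα0 δ)
  set Str : V → Finset V := fun δ => (T δ).image (fun k : ℕ => δ + (k : ℤ) • α) with hStr
  set Bot : V → Finset V :=
    fun δ => (Finset.range (T δ).card).image (fun k : ℕ => δ + (k : ℤ) • α) with hBot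
  obtain ⟨B, hmemB⟩ : ∃ B : Finset V, ∀ δ, δ ∈ B ↔ (δ ∈ P ∧ δ - α ∉ P ∧ (T δ).Nonempty) := by
    refine ⟨hPfin.toFinset.filter (fun δ => δ - α ∉ P ∧ (T δ).Nonempty), fun δ => ?_⟩
    simp [hPfin.mem_toFinset, and_assoc]
  have hString : ∀ δ, δ ∈ P → δ - α ∉ P →
      S ∩ {γ | SameString P α δ γ} = ↑((T δ).image (fun k : ℕ => δ + (k : ℤ) • α)) := by
    intro δ hδ hδb
    ext x
    simp only [Set.mem_inter_iff, Set.mem_setOf_eq, sameString_bottom hδ hδb,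
      Finset.coe_image, Set.mem_image, Finset.mem_coe]
    constructor
    · rintro ⟨hxS, k, rfl, hchain⟩
      exact ⟨k, (hmemT δ k).mpr ⟨hxS, hchain⟩, rfl⟩
    · rintro ⟨k, hk, rfl⟩
      obtain ⟨h1, h2⟩ := (hmemT δ k).mp hk
      exact ⟨h1, k, rfl, h2⟩
  have hncard : ∀ δ, δ ∈ P → δ - α ∉ P →
      (S ∩ {γ | SameString P α δ γ}).ncard = (T δ).card := by
    intro δ hδ hδb
    rw [hString δ hδ hδb, Set.ncard_coe_finset, hcard_image]
  have hchain_lt : ∀ δ : V, ∀ k : ℕ, k < (T δ).card → ∀ j : ℕ, j ≤ k →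
      δ + (j : ℤ) • α ∈ P := by
    intro δ k hk j hj
    have hTne : (T δ).Nonempty := Finset.card_pos.mp (by omega)
    have hM := Finset.max'_mem (T δ) hTne
    have hsub : T δ ⊆ Finset.range ((T δ).max' hTne + 1) := fun x hx =>
      Finset.mem_range.mpr (Nat.lt_succ_of_le (Finset.le_max' _ x hx))
    have hcard := Finset.card_le_card hsub
    rw [Finset.card_range] at hcard
    exact ((hmemT δ _).mp hM).2 j (by omega)
  have hBotSS : ∀ δ ∈ B, ∀ x ∈ Bot δ, SameString P α δ x := by
    intro δ hδ x hx
    obtain ⟨hδP, hδb, hTne⟩ := (hmemB δ).mp hδ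
    simp only [hBot] at hx
    obtain ⟨k, hk, rfl⟩ := Finset.mem_image.mp hx
    rw [sameString_bottom hδP hδb]
    exact ⟨k, rfl, hchain_lt δ k (Finset.mem_range.mp hk)⟩
  have hStrSS : ∀ δ ∈ B, ∀ x ∈ Str δ, SameString P α δ x := by
    intro δ hδ x hx
    obtain ⟨hδP, hδb, hTne⟩ := (hmemB δ).mp hδ
    simp only [hStr] at hx
    obtain ⟨k, hk, rfl⟩ := Finset.mem_image.mp hx
    rw [sameString_bottom hδP hδb]
    exact ⟨k, rfl, ((hmemT δ k).mp hk).2⟩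
  have hdisj : ∀ (F : V → Finset V), (∀ δ ∈ B, ∀ x ∈ F δ, SameString P α δ x) →
      (B : Set V).PairwiseDisjoint F := by
    intro F hF δ hδ δ' hδ' hnee
    simp only [Function.onFun]
    rw [Finset.disjoint_left]
    intro x hx hx'
    have hδB : δ ∈ B := Finset.mem_coe.mp hδ
    have hδ'B : δ' ∈ B := Finset.mem_coe.mp hδ'
    obtain ⟨hδP, hδb, -⟩ := (hmemB δ).mp hδB
    obtain ⟨hδ'P, hδ'b, -⟩ := (hmemB δ').mp hδ'B
    exact hnee (bottom_unique hα0 hδP hδb hδ'P hδ'b (hF δ hδB x hx) (hF δ' hδ'B x hx'))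
  have hτe : PetersonTranslate P S α = ↑(B.biUnion Bot) := by
    ext x
    simp only [PetersonTranslate, Set.mem_setOf_eq, Finset.mem_coe, Finset.mem_biUnion]
    constructor
    · rintro ⟨δ, hδ, hδb, k, rfl, hk⟩
      rw [hncard δ hδ hδb] at hk
      have hTne : (T δ).Nonempty := Finset.card_pos.mp (by omega)
      refine ⟨δ, (hmemB δ).mpr ⟨hδ, hδb, hTne⟩, ?_⟩
      simp only [hBot]
      exact Finset.mem_image.mpr ⟨k, Finset.mem_range.mpr hk, rfl⟩
    · rintro ⟨δ, hδB, hx⟩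
      obtain ⟨hδP, hδb, hTne⟩ := (hmemB δ).mp hδB
      simp only [hBot] at hx
      obtain ⟨k, hk, rfl⟩ := Finset.mem_image.mp hx
      exact ⟨δ, hδP, hδb, k, rfl, by
        rw [hncard δ hδP hδb]; exact Finset.mem_range.mp hk⟩
  have hSe : S = ↑(B.biUnion Str) := by
    ext x
    simp only [Finset.mem_coe, Finset.mem_biUnion]
    constructor
    · intro hxS
      obtain ⟨δ, hδP, hδb, k, rfl, hchain⟩ := exists_bottom hPfin hα0 (hS hxS)
      have hkT : k ∈ T δ := (hmemT δ k).mpr ⟨hxS, hchain⟩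
      refine ⟨δ, (hmemB δ).mpr ⟨hδP, hδb, ⟨k, hkT⟩⟩, ?_⟩
      simp only [hStr]
      exact Finset.mem_image.mpr ⟨k, hkT, rfl⟩
    · rintro ⟨δ, hδB, hxStr⟩
      simp only [hStr] at hxStr
      obtain ⟨k, hkT, rfl⟩ := Finset.mem_image.mp hxStr
      exact ((hmemT δ k).mp hkT).1
  have hcompare : ∀ (δ : V) (A : Finset ℕ),
      ((∑ k ∈ Finset.range A.card, (ht δ + (k : ℝ) * ht α)) ≤
        ∑ k ∈ A, (ht δ + (k : ℝ) * ht α)) ∧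
      (A ≠ Finset.range A.card →
        (∑ k ∈ Finset.range A.card, (ht δ + (k : ℝ) * ht α)) <
          ∑ k ∈ A, (ht δ + (k : ℝ) * ht α)) := by
    intro δ A
    have hsplit : ∀ (B' : Finset ℕ), B'.card = A.card →
        (∑ k ∈ B', (ht δ + (k : ℝ) * ht α))
          = A.card * ht δ + ((∑ k ∈ B', k : ℕ) : ℝ) * ht α := by
      intro B' hB'
      rw [Finset.sum_add_distrib, Finset.sum_const, hB', nsmul_eq_mul, ← Finset.sum_mul]
      norm_num [Nat.cast_sum]
    obtain ⟨hle, heqr⟩ := sum_range_card_le A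
    have h1 := hsplit (Finset.range A.card) (by simp)
    have h2 := hsplit A rfl
    constructor
    · rw [h1, h2]
      have hc : ((∑ k ∈ Finset.range A.card, k : ℕ) : ℝ) ≤ ((∑ k ∈ A, k : ℕ) : ℝ) := by
        exact_mod_cast hle
      nlinarith
    · intro hA
      have hlt : (∑ k ∈ Finset.range A.card, k) < ∑ k ∈ A, k :=
        lt_of_le_of_ne hle (fun h => hA (heqr h))
      have hc : ((∑ k ∈ Finset.range A.card, k : ℕ) : ℝ) < ((∑ k ∈ A, k : ℕ) : ℝ) := by
        exact_mod_cast hlt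
      rw [h1, h2]
      nlinarith
  obtain ⟨δ₀, hδ₀B, hδ₀ne⟩ : ∃ δ₀ ∈ B, T δ₀ ≠ Finset.range (T δ₀).card := by
    by_contra hcon
    push_neg at hcon
    apply hne
    rw [hτe, hSe]
    have hBS : ∀ δ ∈ B, Bot δ = Str δ := fun δ hδ => by
      simp only [hBot, hStr]
      conv_rhs => rw [hcon δ hδ]
    rw [Finset.biUnion_congr rfl hBS]
  rw [hτe, hSe, finsum_mem_coe_finset, finsum_mem_coe_finset,
    Finset.sum_biUnion (hdisj Bot hBotSS), Finset.sum_biUnion (hdisj Str hStrSS)]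
  refine Finset.sum_lt_sum (fun δ hδ => ?_) ⟨δ₀, hδ₀B, ?_⟩
  · simp only [hBot, hStr]
    rw [hsum_image, hsum_image]
    exact (hcompare δ (T δ)).1
  · simp only [hBot, hStr]
    rw [hsum_image, hsum_image]
    exact (hcompare δ₀ (T δ₀)).2 hδ₀ne
end

section
/- A subset S of the positive roots of a finite crystallographic root system R is biconvex (both convex and coconvex) if and only if S equals the inversion set I(w) = {α ∈ R⁺ : w⁻¹α ∈ R⁻} for some element w of the Weyl group W(R). -/
open scoped RealInnerProductSpace

variable {V : Type*} [NormedAddCommGroup V] [InnerProductSpace ℝ V]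

set_option linter.unusedSectionVars false
namespace RootAux

variable {V : Type*} [NormedAddCommGroup V] [InnerProductSpace ℝ V]

lemma root_ne_zero (RS : RootSystemData V) {α : V} (h : α ∈ RS.roots) : α ≠ 0 :=
  fun e => RS.zero_not_mem (e ▸ h)

lemma inner_self_pos' (RS : RootSystemData V) {α : V} (h : α ∈ RS.roots) : 0 < ⟪α, α⟫ :=
  lt_of_le_of_ne real_inner_self_nonneg (Ne.symm (inner_self_ne_zero.mpr (root_ne_zero RS h)))

lemma reflLin_apply {α : V} (hα : α ≠ 0) (β : V) :
    reflLin α β = β - (2 * ⟪α, β⟫ / ⟪α, α⟫) • α := by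
  rw [reflLin, dif_neg hα, Module.reflection_apply]
  congr 2
  simp only [LinearMap.smul_apply, ContinuousLinearMap.coe_coe, innerSL_apply_apply, smul_eq_mul]
  ring

lemma reflLin_involutive (α : V) : Function.Involutive (reflLin α) := by
  by_cases hα : α = 0
  · intro x; simp [reflLin, dif_pos hα]
  · intro x
    have := Module.involutive_reflection
      (x := α)
      (f := (2 / ⟪α, α⟫) • ((innerSL ℝ α : V →L[ℝ] ℝ) : V →ₗ[ℝ] ℝ))
      (by
        have h0 : ⟪α, α⟫ ≠ 0 := inner_self_ne_zero.mpr hα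
        simp only [LinearMap.smul_apply, ContinuousLinearMap.coe_coe, innerSL_apply_apply,
          smul_eq_mul]
        field_simp) x
    simpa [reflLin, dif_neg hα] using this

lemma reflLin_symm (α : V) : (reflLin α).symm = reflLin α := by
  ext x
  have h := reflLin_involutive α x
  exact (LinearEquiv.symm_apply_eq _).mpr h.symm

lemma reflLin_self {α : V} (hα : α ≠ 0) : reflLin α α = -α := by
  rw [reflLin_apply hα]
  have h0 : ⟪α, α⟫ ≠ 0 := inner_self_ne_zero.mpr hα
  have : 2 * ⟪α, α⟫ / ⟪α, α⟫ = 2 := by field_simp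
  rw [this, two_smul]
  abel

end RootAux
namespace RootAux

lemma reflLin_smul {α : V} (hα : α ≠ 0) (c : ℝ) : reflLin α (c • α) = -(c • α) := by
  rw [map_smul, reflLin_self hα, smul_neg]

lemma weyl_maps_roots (RS : RootSystemData V) {w : V ≃ₗ[ℝ] V} (hw : w ∈ WeylGroup RS.roots) :
    (∀ x ∈ RS.roots, w x ∈ RS.roots) ∧ (∀ x ∈ RS.roots, w.symm x ∈ RS.roots) := by
  induction hw using Subgroup.closure_induction with
  | mem x hx =>
    obtain ⟨α, hα, rfl⟩ := hx
    have hα0 : α ≠ 0 := root_ne_zero RS hα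
    constructor
    · intro β hβ
      rw [reflLin_apply hα0]
      exact RS.reflect_mem α hα β hβ
    · intro β hβ
      rw [reflLin_symm, reflLin_apply hα0]
      exact RS.reflect_mem α hα β hβ
  | one => exact ⟨fun x hx => hx, fun x hx => hx⟩
  | mul x y _ _ ihx ihy =>
    refine ⟨fun z hz => ihx.1 _ (ihy.1 z hz), fun z hz => ihy.2 _ (ihx.2 z hz)⟩
  | inv x _ ih => exact ⟨fun z hz => ih.2 z hz, fun z hz => ih.1 z hz⟩

lemma reflLin_mem_weyl (RS : RootSystemData V) {α : V} (hα : α ∈ RS.roots) :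
    reflLin α ∈ WeylGroup RS.roots :=
  Subgroup.subset_closure ⟨α, hα, rfl⟩

lemma pos_mem_or (RS : RootSystemData V) {α : V} (hα : α ∈ RS.roots) (h : -α ∉ RS.pos) :
    α ∈ RS.pos := (RS.pos_total α hα).resolve_right h

end RootAux
namespace RootAux

lemma inversionSet_biconvex (RS : RootSystemData V) {w : V ≃ₗ[ℝ] V}
    (hw : w ∈ WeylGroup RS.roots) : IsBiconvex RS.pos (inversionSet RS.pos w) := by
  obtain ⟨hfwd, hsym⟩ := weyl_maps_roots RS hw
  refine ⟨fun α hα => hα.1, ?_, ?_⟩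
  · intro a b ha hb hab
    refine ⟨hab, ?_⟩
    have h1 : -(w.symm a) ∈ RS.pos := ha.2
    have h2 : -(w.symm b) ∈ RS.pos := hb.2
    have hsum : -(w.symm a) + -(w.symm b) ∈ RS.roots := by
      have : w.symm (a + b) ∈ RS.roots := hsym _ (RS.pos_subset hab)
      have := RS.neg_mem _ this
      rw [map_add] at this
      simpa [neg_add, add_comm] using this
    have := RS.pos_add _ h1 _ h2 hsum
    rw [map_add]
    simpa [neg_add, add_comm] using this
  · intro a b ha hb hab
    refine ⟨hab, fun hmem => ?_⟩
    have ha' : w.symm a ∈ RS.pos := by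
      refine pos_mem_or RS (hsym _ (RS.pos_subset ha.1)) ?_
      intro h; exact ha.2 ⟨ha.1, h⟩
    have hb' : w.symm b ∈ RS.pos := by
      refine pos_mem_or RS (hsym _ (RS.pos_subset hb.1)) ?_
      intro h; exact hb.2 ⟨hb.1, h⟩
    have hsum : w.symm a + w.symm b ∈ RS.roots := by
      have : w.symm (a + b) ∈ RS.roots := hsym _ (RS.pos_subset hab)
      rwa [map_add] at this
    have hp : w.symm a + w.symm b ∈ RS.pos := RS.pos_add _ ha' _ hb' hsum
    have : -(w.symm (a+b)) ∈ RS.pos := hmem.2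
    rw [map_add] at this
    exact RS.pos_not_both _ hp this

end RootAux
namespace RootAux

/-- Cast a ℕ-finsupp to an ℝ-finsupp. -/
noncomputable def toR (c : V →₀ ℕ) : V →₀ ℝ := c.mapRange Nat.cast Nat.cast_zero

lemma toR_sum (c : V →₀ ℕ) :
    Finsupp.linearCombination ℝ (id : V → V) (toR c) = c.sum fun v n => (n : ℝ) • v := by
  rw [Finsupp.linearCombination_apply, toR]
  exact Finsupp.sum_mapRange_index (fun a => zero_smul ℝ _)

lemma toR_support (c : V →₀ ℕ) : (toR c).support ⊆ c.support := Finsupp.support_mapRange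

lemma coeff_eq_zero (RS : RootSystemData V) (l : V →₀ ℝ) (hl : ↑l.support ⊆ RS.simple)
    (h : Finsupp.linearCombination ℝ (id : V → V) l = 0) : l = 0 :=
  (linearIndepOn_iff (v := id)).mp RS.simple_indep l (Finsupp.mem_supported ℝ l |>.mpr hl) h

open scoped Classical in
/-- A linear functional equal to 1 on all simple roots. -/
noncomputable def htF (RS : RootSystemData V) : V →ₗ[ℝ] ℝ :=
  (Module.Basis.extend RS.simple_indep).constr ℝ fun i => if (i : V) ∈ RS.simple then (1 : ℝ) else 0

lemma htF_simple (RS : RootSystemData V) {v : V} (hv : v ∈ RS.simple) : htF RS v = 1 := by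
  classical
  have hmem : v ∈ LinearIndepOn.extend (v := id) RS.simple_indep (Set.subset_univ RS.simple) :=
    LinearIndepOn.subset_extend (v := id) RS.simple_indep _ hv
  have h2 : (Module.Basis.extend RS.simple_indep) ⟨v, hmem⟩ = v :=
    Module.Basis.extend_apply_self RS.simple_indep ⟨v, hmem⟩
  have h := Module.Basis.constr_basis (Module.Basis.extend RS.simple_indep) ℝ
    (fun i => if (i : V) ∈ RS.simple then (1 : ℝ) else 0) ⟨v, hmem⟩
  rw [h2] at h
  rw [htF, h, if_pos hv]

lemma htF_sum (RS : RootSystemData V) (c : V →₀ ℕ) (hc : ↑c.support ⊆ RS.simple) :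
    htF RS (c.sum fun v n => (n : ℝ) • v) = c.sum fun _ n => (n : ℝ) := by
  rw [map_finsuppSum]
  refine Finsupp.sum_congr fun v hv => ?_
  rw [map_smul, htF_simple RS (hc hv), smul_eq_mul, mul_one]

lemma htF_pos (RS : RootSystemData V) {α : V} (hα : α ∈ RS.pos) : 1 ≤ htF RS α := by
  obtain ⟨c, hc, rfl⟩ := RS.pos_nat_comb α hα
  rw [htF_sum RS c hc]
  have hne : c ≠ 0 := by
    rintro rfl
    exact RS.zero_not_mem (RS.pos_subset (by simpa using hα))
  obtain ⟨v, hv⟩ := Finsupp.ne_iff.mp hne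
  have hv' : v ∈ c.support := Finsupp.mem_support_iff.mpr (by simpa using hv)
  have h1 : (1 : ℝ) ≤ (c v : ℝ) := by
    exact_mod_cast Nat.one_le_iff_ne_zero.mpr (by simpa using hv)
  calc (1:ℝ) ≤ (c v : ℝ) := h1
    _ ≤ c.sum fun _ n => (n : ℝ) := by
        refine Finset.single_le_sum (f := fun v => ((c v : ℝ))) (fun i _ => by positivity) hv'

end RootAux
namespace RootAux

lemma support_singleton_smul {α : V} (c : V →₀ ℕ) (hc : (c.support : Set V) ⊆ {s})
    (hα : α = c.sum fun v n => (n : ℝ) • v) : α = (c s : ℝ) • s := by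
  have h : c = Finsupp.single s (c s) := by
    rw [← Finsupp.support_subset_singleton]
    exact fun v hv => Finset.mem_singleton.mpr (hc hv)
  rw [hα, h, Finsupp.sum_single_index (by simp)]
  simp

/-- If a positive root is not a multiple of the simple root `s`, it has a simple root other
than `s` with positive coefficient, and then `r • s - α` cannot be positive. -/
lemma smul_sub_not_pos (RS : RootSystemData V) {s : V} (hs : s ∈ RS.simple) {α : V}
    (hα : α ∈ RS.pos) (hm : ∀ c : ℝ, α ≠ c • s) (r : ℝ) : r • s - α ∉ RS.pos := by
  intro hβ
  obtain ⟨c, hc, hcα⟩ := RS.pos_nat_comb α hα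
  obtain ⟨d, hd, hdβ⟩ := RS.pos_nat_comb _ hβ
  set l : V →₀ ℝ := toR c + toR d - Finsupp.single s r with hl
  have hker : Finsupp.linearCombination ℝ (id : V → V) l = 0 := by
    rw [hl]
    simp only [map_sub, map_add, toR_sum, Finsupp.linearCombination_single, id]
    rw [← hcα, ← hdβ]
    abel
  have hsupp : (l.support : Set V) ⊆ RS.simple := by
    classical
    intro v hv
    have hv' : v ∈ l.support := hv
    rw [hl] at hv'
    rcases Finset.mem_union.mp (Finsupp.support_sub hv') with h | h
    · rcases Finset.mem_union.mp (Finsupp.support_add h) with h2 | h2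
      · exact hc (toR_support c h2)
      · exact hd (toR_support d h2)
    · have := Finsupp.support_single_subset h
      rw [Finset.mem_singleton] at this
      exact this ▸ hs
  have hl0 : l = 0 := coeff_eq_zero RS l hsupp hker
  -- find v₀ ∈ c.support with v₀ ≠ s
  have hns : ¬ (c.support : Set V) ⊆ {s} := by
    intro h
    exact hm _ (support_singleton_smul c h hcα)
  obtain ⟨v₀, hv₀c, hv₀s⟩ : ∃ v₀ ∈ c.support, v₀ ≠ s := by
    by_contra h
    push_neg at h
    exact hns fun v hv => h v hv
  have : l v₀ = 0 := by rw [hl0]; rfl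
  rw [hl] at this
  simp only [Finsupp.sub_apply, Finsupp.add_apply, Finsupp.single_eq_of_ne hv₀s,
    sub_zero, toR, Finsupp.mapRange_apply] at this
  have h1 : (1 : ℝ) ≤ (c v₀ : ℝ) := by
    exact_mod_cast Nat.one_le_iff_ne_zero.mpr (Finsupp.mem_support_iff.mp hv₀c)
  have h2 : (0 : ℝ) ≤ (d v₀ : ℝ) := by positivity
  linarith

end RootAux
namespace RootAux

lemma exists_simple_inner_pos (RS : RootSystemData V) {α : V} (hα : α ∈ RS.pos) :
    ∃ v ∈ RS.simple, 0 < ⟪v, α⟫ := by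
  obtain ⟨c, hc, hcα⟩ := RS.pos_nat_comb α hα
  by_contra h
  push_neg at h
  have hip : 0 < ⟪α, α⟫ := inner_self_pos' RS (RS.pos_subset hα)
  have : ⟪α, α⟫ ≤ 0 := by
    nth_rewrite 1 [hcα]
    rw [Finsupp.sum, sum_inner]
    refine Finset.sum_nonpos fun v hv => ?_
    rw [real_inner_smul_left]
    have h1 : ⟪v, α⟫ ≤ 0 := h v (hc hv)
    have h2 : (0:ℝ) ≤ (c v : ℝ) := by positivity
    exact mul_nonpos_of_nonneg_of_nonpos h2 h1
  linarith

lemma sub_mem_of_inner_pos (RS : RootSystemData V) {α β : V} (hα : α ∈ RS.roots)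
    (hβ : β ∈ RS.roots) (hne : α ≠ β) (hip : 0 < ⟪α, β⟫) : α - β ∈ RS.roots := by
  have hαα : 0 < ⟪α, α⟫ := inner_self_pos' RS hα
  have hββ : 0 < ⟪β, β⟫ := inner_self_pos' RS hβ
  obtain ⟨m, hm⟩ := RS.crystallographic α hα β hβ
  obtain ⟨n, hn⟩ := RS.crystallographic β hβ α hα
  have hip' : 0 < ⟪β, α⟫ := by rwa [real_inner_comm]
  have hm1 : 1 ≤ m := by
    by_contra h
    push_neg at h
    have : (m:ℝ) ≤ 0 := by exact_mod_cast (by omega : m ≤ 0)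
    nlinarith
  have hn1 : 1 ≤ n := by
    by_contra h
    push_neg at h
    have : (n:ℝ) ≤ 0 := by exact_mod_cast (by omega : n ≤ 0)
    nlinarith
  by_cases hm2 : m = 1
  · have hroot := RS.reflect_mem α hα β hβ
    have h1 : (2 * ⟪α, β⟫ / ⟪α, α⟫) = 1 := by
      rw [hm, hm2]
      push_cast
      field_simp
    rw [h1, one_smul] at hroot
    have := RS.neg_mem _ hroot
    rwa [neg_sub] at this
  by_cases hn2 : n = 1
  · have hroot := RS.reflect_mem β hβ α hα
    have h1 : (2 * ⟪β, α⟫ / ⟪β, β⟫) = 1 := by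
      rw [hn, hn2]
      push_cast
      field_simp
    rwa [h1, one_smul] at hroot
  exfalso
  have hm2r : (2:ℝ) ≤ (m:ℝ) := by exact_mod_cast (by omega : (2:ℤ) ≤ m)
  have hn2r : (2:ℝ) ≤ (n:ℝ) := by exact_mod_cast (by omega : (2:ℤ) ≤ n)
  have hCS : ⟪α, β⟫ * ⟪α, β⟫ ≤ ⟪α, α⟫ * ⟪β, β⟫ := real_inner_mul_inner_self_le α β
  have hba : ⟪β, α⟫ = ⟪α, β⟫ := real_inner_comm α β
  rw [hba] at hn
  have h4 : 4 * (⟪α, β⟫ * ⟪α, β⟫) = (m:ℝ) * (n:ℝ) * (⟪α, α⟫ * ⟪β, β⟫) := by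
    nlinarith [hm, hn]
  have hmn : (4:ℝ) ≤ (m:ℝ) * (n:ℝ) := by nlinarith
  have key : ⟪α, β⟫ * ⟪α, β⟫ = ⟪α, α⟫ * ⟪β, β⟫ := by
    nlinarith [mul_pos hαα hββ]
  have hnorm : ‖⟪α, β⟫‖ = ‖α‖ * ‖β‖ := by
    have h1 : ⟪α, α⟫ = ‖α‖ * ‖α‖ := real_inner_self_eq_norm_mul_norm α
    have h2 : ⟪β, β⟫ = ‖β‖ * ‖β‖ := real_inner_self_eq_norm_mul_norm β
    rw [Real.norm_eq_abs]
    have hle : |⟪α, β⟫| ≤ ‖α‖ * ‖β‖ := abs_real_inner_le_norm α β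
    have hsq : |⟪α, β⟫| * |⟪α, β⟫| = (‖α‖ * ‖β‖) * (‖α‖ * ‖β‖) := by
      rw [abs_mul_abs_self]
      rw [key, h1, h2]; ring
    nlinarith [abs_nonneg ⟪α, β⟫]
  obtain ⟨r, hr0, hrβ⟩ := (norm_inner_eq_norm_iff (𝕜 := ℝ)
    (root_ne_zero RS hα) (root_ne_zero RS hβ)).mp hnorm
  rw [hrβ, real_inner_smul_right] at hm
  rw [hrβ, real_inner_smul_left, real_inner_smul_right] at hn
  have hr1 : 2 * r = (m:ℝ) :=
    mul_right_cancel₀ (ne_of_gt hαα) (by linear_combination hm)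
  have hr2 : (2:ℝ) = (n:ℝ) * r :=
    mul_right_cancel₀ (mul_ne_zero hr0 (ne_of_gt hαα)) (by linear_combination hn)
  have hrge : 1 ≤ r := by linarith
  have hrle : r ≤ 1 := by nlinarith
  have : r = 1 := le_antisymm hrle hrge
  exact hne (by rw [hrβ, this, one_smul])

end RootAux
namespace RootAux

lemma smul_mem_pos_cases (RS : RootSystemData V) {s : V} (hs : s ∈ RS.simple) {c : ℝ}
    (hc : c • s ∈ RS.pos) : c = 1 ∨ c = 2 := by
  have hsr : s ∈ RS.roots := RS.pos_subset (RS.simple_subset hs)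
  have hss : 0 < ⟪s, s⟫ := inner_self_pos' RS hsr
  have hx : c • s ∈ RS.roots := RS.pos_subset hc
  have hc1 : 1 ≤ c := by
    have h1 := htF_pos RS hc
    rwa [map_smul, htF_simple RS hs, smul_eq_mul, mul_one] at h1
  obtain ⟨k, hk⟩ := RS.crystallographic (c • s) hx s hsr
  rw [real_inner_smul_left, real_inner_smul_left, real_inner_smul_right] at hk
  have hcs0 : c * ⟪s, s⟫ ≠ 0 := mul_ne_zero (by linarith) (ne_of_gt hss)
  have hkc : (k : ℝ) * c = 2 :=
    mul_right_cancel₀ hcs0 (by linear_combination -hk)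
  have hk1 : 1 ≤ k := by
    by_contra h
    push_neg at h
    have : (k:ℝ) ≤ 0 := by exact_mod_cast (by omega : k ≤ 0)
    nlinarith
  have hk2 : k ≤ 2 := by
    by_contra h
    push_neg at h
    have : (3:ℝ) ≤ (k:ℝ) := by exact_mod_cast (by omega : (3:ℤ) ≤ k)
    nlinarith
  interval_cases k
  · right; push_cast at hkc; linarith
  · left; push_cast at hkc; linarith

lemma mem_M_cases (RS : RootSystemData V) {s : V} (hs : s ∈ RS.simple) {x : V}
    (hx : x ∈ RS.pos) {c : ℝ} (hxc : x = c • s) : x = s ∨ x = (2:ℝ) • s := by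
  subst hxc
  rcases smul_mem_pos_cases RS hs hx with h | h <;> subst h
  · left; simp
  · right; rfl

lemma reflLin_simple_pos (RS : RootSystemData V) {s : V} (hs : s ∈ RS.simple) {α : V}
    (hα : α ∈ RS.pos) (hm : ∀ c : ℝ, α ≠ c • s) :
    reflLin s α ∈ RS.pos ∧ ∀ c : ℝ, reflLin s α ≠ c • s := by
  have hsr : s ∈ RS.roots := RS.pos_subset (RS.simple_subset hs)
  have hs0 : s ≠ 0 := root_ne_zero RS hsr
  have hroot : reflLin s α ∈ RS.roots := by
    rw [reflLin_apply hs0]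
    exact RS.reflect_mem s hsr α (RS.pos_subset hα)
  have hform : reflLin s α = α - (2 * ⟪s, α⟫ / ⟪s, s⟫) • s := reflLin_apply hs0 α
  have hpos : reflLin s α ∈ RS.pos := by
    refine pos_mem_or RS hroot ?_
    rw [hform, neg_sub]
    exact smul_sub_not_pos RS hs hα hm _
  refine ⟨hpos, fun c hc => ?_⟩
  have : α = reflLin s (reflLin s α) := (reflLin_involutive s α).symm
  rw [hc, reflLin_smul hs0, ← neg_smul] at this
  exact hm (-c) this

lemma exists_simple_mem (RS : RootSystemData V) {S : Set V} (hS : IsBiconvex RS.pos S)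
    (hne : S.Nonempty) : ∃ s ∈ RS.simple, s ∈ S := by
  have hfin : S.Finite := RS.finite.subset (hS.1.trans RS.pos_subset)
  obtain ⟨α, hαS, hmin⟩ := Set.exists_min_image S (htF RS) hfin hne
  by_cases hsimp : α ∈ RS.simple
  · exact ⟨α, hsimp, hαS⟩
  have hαp : α ∈ RS.pos := hS.1 hαS
  obtain ⟨v, hv, hiv⟩ := exists_simple_inner_pos RS hαp
  have hvp : v ∈ RS.pos := RS.simple_subset hv
  have hne' : α ≠ v := fun h => hsimp (h ▸ hv)
  have hsub : α - v ∈ RS.roots :=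
    sub_mem_of_inner_pos RS (RS.pos_subset hαp) (RS.pos_subset hvp) hne'
      (by rwa [real_inner_comm])
  rcases RS.pos_total _ hsub with hcase | hcase
  · -- α = (α - v) + v
    have hsum : (α - v) + v = α := by abel
    have key : (α - v) ∈ S ∨ v ∈ S := by
      by_contra h
      push_neg at h
      have h1 : (α - v) ∈ RS.pos \ S := ⟨hcase, h.1⟩
      have h2 : v ∈ RS.pos \ S := ⟨hvp, h.2⟩
      have := hS.2.2 h1 h2 (by rwa [hsum])
      rw [hsum] at this
      exact this.2 hαS
    rcases key with hk | hk
    · have h1 := hmin _ hk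
      have h2 : htF RS (α - v) = htF RS α - 1 := by
        rw [map_sub, htF_simple RS hv]
      have h3 := htF_pos RS hvp
      exact (by linarith : False).elim
    · exact ⟨v, hv, hk⟩
  · have h1 := htF_pos RS hcase
    rw [map_neg, map_sub, htF_simple RS hv] at h1
    have h2 := htF_pos RS hαp
    exact (by linarith : False).elim

end RootAux
namespace RootAux

lemma inversion_empty (RS : RootSystemData V) :
    (∅ : Set V) = inversionSet RS.pos (1 : V ≃ₗ[ℝ] V) := by
  ext α
  simp only [Set.mem_empty_iff_false, inversionSet, Set.mem_setOf_eq, false_iff]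
  rintro ⟨h1, h2⟩
  exact RS.pos_not_both α h1 h2

lemma biconvex_to_inversion (RS : RootSystemData V) :
    ∀ n : ℕ, ∀ S : Set V, S.ncard ≤ n → IsBiconvex RS.pos S →
      ∃ w ∈ WeylGroup RS.roots, S = inversionSet RS.pos w := by
  intro n
  induction n with
  | zero =>
    intro S hcard hS
    have hfin : S.Finite := RS.finite.subset (hS.1.trans RS.pos_subset)
    have hS0 : S = ∅ := by
      have := Set.ncard_eq_zero hfin |>.mp (Nat.le_zero.mp hcard)
      exact this
    rw [hS0]
    exact ⟨1, one_mem _, inversion_empty RS⟩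
  | succ n ih =>
    intro S hcard hS
    rcases Set.eq_empty_or_nonempty S with rfl | hne
    · exact ⟨1, one_mem _, inversion_empty RS⟩
    have hfin : S.Finite := RS.finite.subset (hS.1.trans RS.pos_subset)
    obtain ⟨s, hs, hsS⟩ := exists_simple_mem RS hS hne
    have hsp : s ∈ RS.pos := RS.simple_subset hs
    have hsr : s ∈ RS.roots := RS.pos_subset hsp
    have hs0 : s ≠ 0 := root_ne_zero RS hsr
    set σ := reflLin s with hσdef
    have hσinv : ∀ x, σ (σ x) = x := reflLin_involutive s
    set M : Set V := {x | x ∈ RS.pos ∧ ∃ c : ℝ, x = c • s} with hMdef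
    have hsM : s ∈ M := ⟨hsp, 1, (one_smul ℝ s).symm⟩
    have hMS : M ⊆ S := by
      rintro x ⟨hxp, c, hc⟩
      rcases mem_M_cases RS hs hxp hc with h2 | h2
      · rw [h2]; exact hsS
      · rw [h2, two_smul]
        exact hS.2.1 hsS hsS (by rw [← two_smul ℝ, ← h2]; exact hxp)
    have hσpos : ∀ x, x ∈ RS.pos → x ∉ M → σ x ∈ RS.pos ∧ σ x ∉ M := by
      intro x hxp hxM
      have hnc : ∀ c : ℝ, x ≠ c • s := fun c hc => hxM ⟨hxp, c, hc⟩
      obtain ⟨h1, h2⟩ := reflLin_simple_pos RS hs hxp hnc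
      exact ⟨h1, fun hmem => by obtain ⟨_, c, hc⟩ := hmem; exact h2 c hc⟩
    have hσM : ∀ x ∈ M, σ x = -x := by
      rintro x ⟨hxp, c, rfl⟩
      exact reflLin_smul hs0 c
    set S' : Set V := σ '' (S \ M) with hS'def
    have hS'card : S'.ncard ≤ n := by
      have h1 : S'.ncard = (S \ M).ncard := Set.ncard_image_of_injective _ σ.injective
      have h2 : (S \ M).ncard < S.ncard := by
        refine Set.ncard_lt_ncard ?_ hfin
        exact ⟨Set.diff_subset, fun h => (h hsS).2 hsM⟩
      omega
    have hS'bi : IsBiconvex RS.pos S' := by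
      refine ⟨?_, ?_, ?_⟩
      · rintro _ ⟨z, ⟨hzS, hzM⟩, rfl⟩
        exact (hσpos z (hS.1 hzS) hzM).1
      · rintro a b ⟨x, ⟨hxS, hxM⟩, rfl⟩ ⟨y, ⟨hyS, hyM⟩, rfl⟩ hab
        have hsum : σ x + σ y = σ (x + y) := (map_add σ x y).symm
        have hxy_root : x + y ∈ RS.roots := by
          have h1 : σ x + σ y ∈ RS.roots := RS.pos_subset hab
          have h2 := (weyl_maps_roots RS (reflLin_mem_weyl RS hsr)).1 _ h1
          rwa [hsum, hσinv] at h2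
        have hxyp : x + y ∈ RS.pos := RS.pos_add _ (hS.1 hxS) _ (hS.1 hyS) hxy_root
        have hxyS : x + y ∈ S := hS.2.1 hxS hyS hxyp
        have hxyM : x + y ∉ M := by
          intro hmem
          have h3 : σ (x + y) = -(x + y) := hσM _ hmem
          have h4 : -(x + y) ∈ RS.pos := by rw [← h3, ← hsum]; exact hab
          exact RS.pos_not_both _ hxyp h4
        exact ⟨x + y, ⟨hxyS, hxyM⟩, (map_add σ x y)⟩
      · rintro a b ⟨hap, haS'⟩ ⟨hbp, hbS'⟩ hab
        refine ⟨hab, fun habS' => ?_⟩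
        obtain ⟨z, ⟨hzS, hzM⟩, hz⟩ := habS'
        have h2 : σ (a + b) = z := by rw [← hz, hσinv]
        by_cases haM : a ∈ M
        · by_cases hbM : b ∈ M
          · have h3 : σ (a + b) = -(a + b) := by
              rw [map_add, hσM a haM, hσM b hbM, neg_add]
            have h4 : -(a + b) ∈ RS.pos := by rw [← h3, h2]; exact hS.1 hzS
            exact RS.pos_not_both _ hab h4
          · have hσb := hσpos b hbp hbM
            have hσbS : σ b ∉ S := fun hmem => hbS' ⟨σ b, ⟨hmem, hσb.2⟩, hσinv b⟩
            have h1 : σ b = a + σ (a + b) := by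
              rw [map_add, hσM a haM]; abel
            have h3 : a + z ∈ S := hS.2.1 (hMS haM) hzS (by rw [← h2, ← h1]; exact hσb.1)
            exact hσbS (by rw [h1, h2]; exact h3)
        · by_cases hbM : b ∈ M
          · have hσa := hσpos a hap haM
            have hσaS : σ a ∉ S := fun hmem => haS' ⟨σ a, ⟨hmem, hσa.2⟩, hσinv a⟩
            have h1 : σ a = b + σ (a + b) := by
              rw [map_add, hσM b hbM]; abel
            have h3 : b + z ∈ S := hS.2.1 (hMS hbM) hzS (by rw [← h2, ← h1]; exact hσa.1)
            exact hσaS (by rw [h1, h2]; exact h3)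
          · have hσa := hσpos a hap haM
            have hσb := hσpos b hbp hbM
            have hσaS : σ a ∉ S := fun hmem => haS' ⟨σ a, ⟨hmem, hσa.2⟩, hσinv a⟩
            have hσbS : σ b ∉ S := fun hmem => hbS' ⟨σ b, ⟨hmem, hσb.2⟩, hσinv b⟩
            have h4 : σ a + σ b ∈ RS.pos := by rw [← map_add, h2]; exact hS.1 hzS
            have h5 := hS.2.2 ⟨hσa.1, hσaS⟩ ⟨hσb.1, hσbS⟩ h4
            exact h5.2 (by rw [← map_add, h2]; exact hzS)
    obtain ⟨w', hw', hS'eq⟩ := ih S' hS'card hS'bi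
    refine ⟨σ * w', mul_mem (reflLin_mem_weyl RS hsr) hw', ?_⟩
    have hwsymm : ∀ α : V, ((σ * w').symm) α = w'.symm (σ α) := by
      intro α
      have h : (σ * w').symm α = w'.symm (σ.symm α) := rfl
      rw [h, hσdef, reflLin_symm]
    ext α
    constructor
    · intro hαS
      have hαp := hS.1 hαS
      refine ⟨hαp, ?_⟩
      rw [hwsymm]
      by_cases hαM : α ∈ M
      · rw [hσM α hαM, map_neg, neg_neg]
        have hαS' : α ∉ S' := by
          rintro ⟨z, ⟨hzS, hzM⟩, hz⟩
          exact (hσpos z (hS.1 hzS) hzM).2 (hz ▸ hαM)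
        have hninv : α ∉ inversionSet RS.pos w' := hS'eq ▸ hαS'
        refine pos_mem_or RS ((weyl_maps_roots RS hw').2 α (RS.pos_subset hαp)) ?_
        exact fun hneg => hninv ⟨hαp, hneg⟩
      · have hmem : σ α ∈ S' := ⟨α, ⟨hαS, hαM⟩, rfl⟩
        rw [hS'eq] at hmem
        exact hmem.2
    · rintro ⟨hαp, hinv⟩
      rw [hwsymm] at hinv
      by_cases hαM : α ∈ M
      · exact hMS hαM
      · have hσα := hσpos α hαp hαM
        have hmem : σ α ∈ inversionSet RS.pos w' := ⟨hσα.1, hinv⟩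
        rw [← hS'eq] at hmem
        obtain ⟨z, ⟨hzS, hzM⟩, hz⟩ := hmem
        have hz' : z = α := σ.injective hz
        exact hz' ▸ hzS

end RootAux
/-- A subset of the positive roots is biconvex if and only if it is the
inversion set of some Weyl group element. -/
theorem isBiconvex_iff_inversionSet
    (RS : RootSystemData V) (S : Set V) :
    IsBiconvex RS.pos S ↔ ∃ w ∈ WeylGroup RS.roots, S = inversionSet RS.pos w := by
  constructor
  · intro hS
    exact RootAux.biconvex_to_inversion RS S.ncard S le_rfl hS
  · rintro ⟨w, hw, rfl⟩
    exact RootAux.inversionSet_biconvex RS hw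
end

section
/- For a subspace U of the ambient space of a finite crystallographic root system R and an element w of the Weyl group, the set I(w) ∩ U is a biconvex subset of the root system R_U = R ∩ U with positive roots R⁺ ∩ U; consequently, if a biconvex set S contains the pattern (S_0, R_0) via a subspace U (i.e., R_U ≅ R_0 identifies S ∩ U with S_0), then S_0 is biconvex in R_0. -/
open scoped RealInnerProductSpace

variable {V : Type*} [NormedAddCommGroup V] [InnerProductSpace ℝ V]

lemma reflLin_apply' {α : V} (hα : α ≠ 0) (v : V) :
    reflLin α v = v - (2 * ⟪α, v⟫ / ⟪α, α⟫) • α := by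
  rw [reflLin, dif_neg hα, Module.reflection_apply]
  congr 2
  simp only [LinearMap.smul_apply, ContinuousLinearMap.coe_coe, innerSL_apply_apply, smul_eq_mul]
  ring

lemma reflLin_symm (α : V) : (reflLin α).symm = reflLin α := by
  by_cases h : α = 0
  · simp [reflLin, h]
  · rw [reflLin, dif_neg h]
    exact Module.reflection_symm _

lemma weyl_mem_roots (RS : RootSystemData V) {w : V ≃ₗ[ℝ] V}
    (hw : w ∈ WeylGroup RS.roots) :
    ∀ α ∈ RS.roots, w α ∈ RS.roots ∧ w.symm α ∈ RS.roots := by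
  induction hw using Subgroup.closure_induction with
  | mem g hg =>
      obtain ⟨β, hβ, rfl⟩ := hg
      have hβ0 : β ≠ 0 := fun h => RS.zero_not_mem (h ▸ hβ)
      intro α hα
      constructor
      · rw [reflLin_apply' hβ0]; exact RS.reflect_mem β hβ α hα
      · rw [reflLin_symm, reflLin_apply' hβ0]; exact RS.reflect_mem β hβ α hα
  | one => intro α hα; simpa using ⟨hα, hα⟩
  | mul x y _ _ ihx ihy =>
      intro α hα
      constructor
      · have : x (y α) ∈ RS.roots := (ihx _ (ihy α hα).1).1
        simpa using this
      · have : y.symm (x.symm α) ∈ RS.roots := (ihy _ (ihx α hα).2).2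
        exact this
  | inv x _ ih =>
      intro α hα
      constructor
      · have := (ih α hα).2
        simpa using this
      · have := (ih α hα).1
        exact this

/-- For a subspace `U` and a Weyl group element `w`, the set `I(w) ∩ U` is
biconvex in the root system `R_U = R ∩ U` with positive roots `R⁺ ∩ U`; more generally,
the intersection with `U` of any biconvex set is biconvex in `R_U`. -/
theorem inversionSet_inter_subspace_isBiconvex
    (RS : RootSystemData V) (U : Submodule ℝ V)
    (w : V ≃ₗ[ℝ] V) (hw : w ∈ WeylGroup RS.roots) :
    IsBiconvex (RS.pos ∩ ↑U) (inversionSet RS.pos w ∩ ↑U) ∧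
    (∀ S : Set V, IsBiconvex RS.pos S → IsBiconvex (RS.pos ∩ ↑U) (S ∩ ↑U)) := by
  have hIw : IsBiconvex RS.pos (inversionSet RS.pos w) := by
    refine ⟨fun a ha => ha.1, ?_, ?_⟩
    · intro a b ha hb hab
      refine ⟨hab, ?_⟩
      have hroot : -(w.symm a) + -(w.symm b) ∈ RS.roots := by
        have := RS.neg_mem _ ((weyl_mem_roots RS hw _ (RS.pos_subset hab)).2)
        rw [map_add] at this
        simpa [neg_add, add_comm] using this
      have := RS.pos_add _ ha.2 _ hb.2 hroot
      rw [map_add, neg_add]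
      exact this
    · intro a b ha hb hab
      have hwa : w.symm a ∈ RS.pos := by
        rcases RS.pos_total _ ((weyl_mem_roots RS hw _ (RS.pos_subset ha.1)).2) with h | h
        · exact h
        · exact absurd ⟨ha.1, h⟩ ha.2
      have hwb : w.symm b ∈ RS.pos := by
        rcases RS.pos_total _ ((weyl_mem_roots RS hw _ (RS.pos_subset hb.1)).2) with h | h
        · exact h
        · exact absurd ⟨hb.1, h⟩ hb.2
      have hsum : w.symm (a + b) ∈ RS.pos := by
        rw [map_add]
        refine RS.pos_add _ hwa _ hwb ?_
        rw [← map_add]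
        exact (weyl_mem_roots RS hw _ (RS.pos_subset hab)).2
      exact ⟨hab, fun h => RS.pos_not_both _ hsum h.2⟩
  have hgen : ∀ S : Set V, IsBiconvex RS.pos S → IsBiconvex (RS.pos ∩ ↑U) (S ∩ ↑U) := by
    rintro S ⟨hSP, hS, hSc⟩
    refine ⟨fun a ha => ⟨hSP ha.1, ha.2⟩, ?_, ?_⟩
    · intro a b ha hb hab
      exact ⟨hS ha.1 hb.1 hab.1, hab.2⟩
    · intro a b ha hb hab
      refine ⟨hab, fun h => ?_⟩
      have : a + b ∈ RS.pos \ S :=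
        hSc ⟨ha.1.1, fun hs => ha.2 ⟨hs, ha.1.2⟩⟩
          ⟨hb.1.1, fun hs => hb.2 ⟨hs, hb.1.2⟩⟩ hab.1
      exact this.2 h.1
  exact ⟨hgen _ hIw, hgen⟩
end

section
/- Let S be a coconvex set in R⁺ containing the inversion set I(y) of a Weyl group element y, and let α ∈ I(y). Then the inversion set I(r_α y) of the element r_α y is contained in the Peterson translate τ(S, α), where r_α is the reflection through α. -/
open scoped RealInnerProductSpace

variable {V : Type*} [NormedAddCommGroup V] [InnerProductSpace ℝ V]

namespace RSAux

/-- membership in the nonnegative cone spanned by the simple roots -/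
def InCone (RS : RootSystemData V) (x : V) : Prop :=
  ∃ c : V →₀ ℝ, ↑c.support ⊆ RS.simple ∧ (∀ v, 0 ≤ c v) ∧ x = c.sum fun v r => r • v

variable (RS : RootSystemData V)

theorem cone_of_pos {v : V} (hv : v ∈ RS.pos) : InCone RS v := by
  obtain ⟨c, hsup, hsum⟩ := RS.pos_nat_comb v hv
  refine ⟨c.mapRange (Nat.cast) (by simp), ?_, fun v => by simp, ?_⟩
  · exact (Finset.coe_subset.mpr (Finsupp.support_mapRange)).trans hsup
  · rw [hsum, Finsupp.sum_mapRange_index (by simp)]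

theorem cone_add {x y : V} (hx : InCone RS x) (hy : InCone RS y) : InCone RS (x + y) := by
  classical
  obtain ⟨c, hc1, hc2, rfl⟩ := hx
  obtain ⟨d, hd1, hd2, rfl⟩ := hy
  refine ⟨c + d, ?_, fun v => by simpa using add_nonneg (hc2 v) (hd2 v), ?_⟩
  · exact (Finset.coe_subset.mpr Finsupp.support_add).trans (by
      rw [Finset.coe_union]; exact Set.union_subset hc1 hd1)
  · rw [Finsupp.sum_add_index' (by simp) (fun a b₁ b₂ => add_smul b₁ b₂ a)]

theorem cone_smul {x : V} {r : ℝ} (hr : 0 ≤ r) (hx : InCone RS x) : InCone RS (r • x) := by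
  obtain ⟨c, hc1, hc2, rfl⟩ := hx
  refine ⟨r • c, ?_, fun v => by simpa using mul_nonneg hr (hc2 v), ?_⟩
  · exact (Finset.coe_subset.mpr (Finsupp.support_smul)).trans hc1
  · rw [Finsupp.smul_sum, Finsupp.sum_smul_index (fun a => zero_smul ℝ a)]
    simp [Finsupp.sum, smul_smul]

theorem cone_eq_zero {x : V} (hx : InCone RS x) (hx' : InCone RS (-x)) : x = 0 := by
  classical
  obtain ⟨c, hc1, hc2, hc3⟩ := hx
  obtain ⟨d, hd1, hd2, hd3⟩ := hx'
  have key : c + d = 0 := by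
    have hli := (linearIndepOn_iff (v := id)).mp RS.simple_indep (c + d)
    refine hli ?_ ?_
    · rw [Finsupp.mem_supported]
      exact (Finset.coe_subset.mpr Finsupp.support_add).trans (by
        rw [Finset.coe_union]; exact Set.union_subset hc1 hd1)
    · rw [Finsupp.linearCombination_apply,
        Finsupp.sum_add_index' (by simp) (fun a b₁ b₂ => add_smul b₁ b₂ a)]
      simp only [id]
      rw [← hc3, ← hd3]; abel
  have hc0 : c = 0 := by
    ext v
    have h1 := hc2 v
    have h2 := hd2 v
    have h3 : c v + d v = 0 := by
      have := congrFun (congrArg (fun f => f.toFun) key) v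
      exact this
    simp only [Finsupp.coe_zero, Pi.zero_apply]
    linarith
  rw [hc3, hc0]
  simp

theorem pos_ne_zero {v : V} (hv : v ∈ RS.pos) : v ≠ 0 := by
  rintro rfl; exact RS.zero_not_mem (RS.pos_subset hv)

/-- two positive roots cannot sum to a nonpositive multiple of a positive root -/
theorem no_nonpos_rel {u w t : V} (hu : u ∈ RS.pos) (hw : w ∈ RS.pos) (ht : t ∈ RS.pos)
    {c : ℝ} (hc : c ≤ 0) (heq : u + w = c • t) : False := by
  have h1 : InCone RS (u + w) := cone_add RS (cone_of_pos RS hu) (cone_of_pos RS hw)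
  have h2 : InCone RS (-(u + w)) := by
    rw [heq, ← neg_smul]
    exact cone_smul RS (by linarith) (cone_of_pos RS ht)
  have h0 : u + w = 0 := cone_eq_zero RS h1 h2
  exact RS.pos_not_both u hu (by rw [show -u = w by linear_combination (norm := abel) -h0]; exact hw)

theorem pos_of_root_cone {x : V} (hx : x ∈ RS.roots) (hc : InCone RS x) : x ∈ RS.pos := by
  rcases RS.pos_total x hx with h | h
  · exact h
  · exfalso
    have := cone_eq_zero RS (cone_of_pos RS h) (by simpa using hc)
    rw [show x = 0 by simpa using this] at hx
    exact RS.zero_not_mem hx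

theorem reflLin_apply {α : V} (hα : α ≠ 0) (x : V) :
    reflLin α x = x - (2 * ⟪α, x⟫ / ⟪α, α⟫) • α := by
  rw [reflLin, dif_neg hα, Module.reflection_apply]
  congr 1
  simp only [LinearMap.smul_apply, ContinuousLinearMap.coe_coe, innerSL_apply_apply, smul_eq_mul,
    smul_smul]
  ring_nf

theorem reflLin_symm (α : V) : (reflLin α).symm = reflLin α := by
  by_cases hα : α = 0
  · subst hα; rw [reflLin]; simp
  · rw [reflLin, dif_neg hα]
    exact Module.reflection_symm _

theorem root_ne_zero {α : V} (hα : α ∈ RS.roots) : α ≠ 0 := by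
  rintro rfl; exact RS.zero_not_mem hα

theorem inner_self_pos_of_root {α : V} (hα : α ∈ RS.roots) : (0:ℝ) < ⟪α, α⟫ :=
  lt_of_le_of_ne real_inner_self_nonneg
    (Ne.symm (inner_self_ne_zero.mpr (root_ne_zero RS hα)))

theorem weyl_symm_mem {y : V ≃ₗ[ℝ] V} (hy : y ∈ WeylGroup RS.roots) :
    ∀ x ∈ RS.roots, y.symm x ∈ RS.roots := by
  have main : ∀ g ∈ WeylGroup RS.roots,
      (∀ x ∈ RS.roots, g x ∈ RS.roots) ∧ (∀ x ∈ RS.roots, g.symm x ∈ RS.roots) := by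
    intro g hg
    refine Subgroup.closure_induction ?_ ?_ ?_ ?_ hg
    · rintro f ⟨γ, hγ, rfl⟩
      have hγ0 : γ ≠ 0 := root_ne_zero RS hγ
      constructor
      · intro x hx
        rw [reflLin_apply hγ0]
        exact RS.reflect_mem γ hγ x hx
      · intro x hx
        rw [reflLin_symm, reflLin_apply hγ0]
        exact RS.reflect_mem γ hγ x hx
    · exact ⟨fun x hx => hx, fun x hx => hx⟩
    · rintro f g' hf hg' ⟨hf1, hf2⟩ ⟨hg1, hg2⟩
      constructor
      · intro x hx
        exact hf1 _ (hg1 x hx)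
      · intro x hx
        exact hg2 _ (hf2 x hx)
    · rintro f hf ⟨hf1, hf2⟩
      exact ⟨hf2, hf1⟩
  exact (main y hy).2

theorem exists_int_coeff {α β : V} (hα : α ∈ RS.roots) (hβ : β ∈ RS.roots) :
    ∃ m : ℤ, 2 * ⟪α, β⟫ = (m : ℝ) * ⟪α, α⟫ :=
  RS.crystallographic α hα β hβ

/-- Lemma L: if two roots have negative inner product, their sum is a root or zero. -/
theorem sum_root_of_inner_neg {α θ : V} (hα : α ∈ RS.roots) (hθ : θ ∈ RS.roots)
    (hneg : ⟪α, θ⟫ < 0) : α + θ ∈ RS.roots ∨ α + θ = 0 := by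
  have hαα := inner_self_pos_of_root RS hα
  have hθθ := inner_self_pos_of_root RS hθ
  obtain ⟨na, hna⟩ := RS.crystallographic α hα θ hθ
  obtain ⟨nt, hnt⟩ := RS.crystallographic θ hθ α hα
  have hcomm : ⟪θ, α⟫ = ⟪α, θ⟫ := real_inner_comm α θ
  have hna_neg : na ≤ -1 := by
    by_contra h
    push_neg at h
    have : (0:ℝ) ≤ (na:ℝ) := by exact_mod_cast by omega
    nlinarith
  have hnt_neg : nt ≤ -1 := by
    by_contra h
    push_neg at h
    have : (0:ℝ) ≤ (nt:ℝ) := by exact_mod_cast by omega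
    nlinarith
  by_cases h1 : na = -1
  · left
    have := RS.reflect_mem α hα θ hθ
    have hcoef : 2 * ⟪α, θ⟫ / ⟪α, α⟫ = (-1 : ℝ) := by
      rw [hna, h1]; push_cast; field_simp
    rw [hcoef] at this
    simpa [add_comm] using this
  by_cases h2 : nt = -1
  · left
    have := RS.reflect_mem θ hθ α hα
    have hcoef : 2 * ⟪θ, α⟫ / ⟪θ, θ⟫ = (-1 : ℝ) := by
      rw [hnt, h2]; push_cast; field_simp
    rw [hcoef] at this
    simpa using this
  · -- both ≤ -2, so product forces na = nt = -2 and α + θ = 0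
    have hna2 : na ≤ -2 := by omega
    have hnt2 : nt ≤ -2 := by omega
    have hCS : ⟪α, θ⟫ * ⟪α, θ⟫ ≤ ⟪α, α⟫ * ⟪θ, θ⟫ := real_inner_mul_inner_self_le α θ
    have hprod : ((na * nt : ℤ) : ℝ) ≤ 4 := by
      have h4 : ((na * nt : ℤ) : ℝ) * (⟪α, α⟫ * ⟪θ, θ⟫) = 4 * (⟪α, θ⟫ * ⟪α, θ⟫) := by
        push_cast
        nlinarith [hna, hnt, hcomm]
      have hD : (0:ℝ) < ⟪α, α⟫ * ⟪θ, θ⟫ := mul_pos hαα hθθ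
      have h5 : ((na * nt : ℤ) : ℝ) * (⟪α, α⟫ * ⟪θ, θ⟫) ≤ 4 * (⟪α, α⟫ * ⟪θ, θ⟫) := by
        rw [h4]; nlinarith [hCS]
      exact le_of_mul_le_mul_right h5 hD
    have hprodZ : na * nt ≤ 4 := by exact_mod_cast hprod
    have hna2' : na = -2 ∧ nt = -2 := by
      constructor <;> nlinarith
    right
    obtain ⟨rfl, rfl⟩ := hna2'
    have e1 : ⟪α, θ⟫ = -⟪α, α⟫ := by push_cast at hna; linarith
    have e2 : ⟪α, θ⟫ = -⟪θ, θ⟫ := by push_cast at hnt; linarith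
    have : ⟪α + θ, α + θ⟫ = 0 := by
      rw [real_inner_add_add_self]
      linarith
    exact inner_self_eq_zero.mp this

/-- Root strings are unbroken. -/
theorem string_unbroken {α β : V} (hα : α ∈ RS.roots) (hβ : β ∈ RS.roots)
    (hne : ∀ j : ℤ, β + (j : ℝ) • α ≠ 0) {s : ℕ} (hs : β + (s : ℝ) • α ∈ RS.roots) :
    ∀ i ≤ s, β + (i : ℝ) • α ∈ RS.roots := by
  classical
  intro i hi
  by_contra hcon
  set P : ℕ → Prop := fun j => β + (j : ℝ) • α ∈ RS.roots with hP
  have hP0 : P 0 := by simpa [hP] using hβ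
  set r := Nat.findGreatest P i with hrdef
  have hrP : P r := Nat.findGreatest_spec (Nat.zero_le i) hP0
  have hrle : r ≤ i := Nat.findGreatest_le i
  have hrlt : r < i := lt_of_le_of_ne hrle (fun h => hcon (h ▸ hrP))
  have hr1 : ¬ P (r + 1) := Nat.findGreatest_is_greatest (Nat.lt_succ_self r) (by omega)
  have hdex : ∃ d : ℕ, P (i + d) := ⟨s - i, by rw [Nat.add_sub_cancel' hi]; exact hs⟩
  set d := Nat.find hdex with hddef
  have hdP : P (i + d) := Nat.find_spec hdex
  have hd0 : d ≠ 0 := by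
    intro h
    exact hcon (by simpa [h] using hdP)
  set t := i + d with htdef
  have ht1 : ¬ P (t - 1) := by
    have : t - 1 = i + (d - 1) := by omega
    rw [this]
    exact Nat.find_min hdex (by omega)
  have htr : r + 2 ≤ t := by omega
  -- lower endpoint has nonnegative inner product with α
  have hθr : 0 ≤ ⟪α, β + (r : ℝ) • α⟫ := by
    by_contra h
    push_neg at h
    rcases sum_root_of_inner_neg RS hα hrP h with hmem | hzero
    · exact hr1 (by
        show β + ((r + 1 : ℕ) : ℝ) • α ∈ RS.roots
        have e : β + ((r + 1 : ℕ) : ℝ) • α = α + (β + (r : ℝ) • α) := by push_cast; module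
        rw [e]; exact hmem)
    · refine hne ((r : ℤ) + 1) ?_
      have e : β + (((r : ℤ) + 1 : ℤ) : ℝ) • α = α + (β + (r : ℝ) • α) := by push_cast; module
      rw [e, hzero]
  -- upper endpoint has nonpositive inner product with α
  have hθt : ⟪α, β + (t : ℝ) • α⟫ ≤ 0 := by
    by_contra h
    push_neg at h
    have hnegα : -α ∈ RS.roots := RS.neg_mem α hα
    have h' : ⟪-α, β + (t : ℝ) • α⟫ < 0 := by rw [inner_neg_left]; linarith
    rcases sum_root_of_inner_neg RS hnegα hdP h' with hmem | hzero
    · exact ht1 (by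
        show β + ((t - 1 : ℕ) : ℝ) • α ∈ RS.roots
        have e : β + ((t - 1 : ℕ) : ℝ) • α = -α + (β + (t : ℝ) • α) := by
          have h1 : (1:ℕ) ≤ t := by omega
          push_cast [Nat.cast_sub h1]
          module
        rw [e]; exact hmem)
    · refine hne ((t : ℤ) - 1) ?_
      have e : β + (((t : ℤ) - 1 : ℤ) : ℝ) • α = -α + (β + (t : ℝ) • α) := by push_cast; module
      rw [e, hzero]
  have hαα := inner_self_pos_of_root RS hα
  have e1 : ⟪α, β + (r : ℝ) • α⟫ = ⟪α, β⟫ + (r : ℝ) * ⟪α, α⟫ := by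
    rw [inner_add_right, real_inner_smul_right]
  have e2 : ⟪α, β + (t : ℝ) • α⟫ = ⟪α, β⟫ + (t : ℝ) * ⟪α, α⟫ := by
    rw [inner_add_right, real_inner_smul_right]
  have hrt : (r : ℝ) + 2 ≤ (t : ℝ) := by exact_mod_cast htr
  nlinarith

end RSAux


/-- If a coconvex set `S` contains the inversion set `I(y)` and `α ∈ I(y)`,
then `I(r_α y) ⊆ τ(S, α)`, where `r_α` is the reflection through `α`. -/
theorem inversionSet_reflection_subset_petersonTranslate
    (RS : RootSystemData V) (S : Set V) (hS : IsCoconvex RS.pos S)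
    (y : V ≃ₗ[ℝ] V) (hy : y ∈ WeylGroup RS.roots)
    (hIy : inversionSet RS.pos y ⊆ S)
    (α : V) (hα : α ∈ inversionSet RS.pos y) :
    inversionSet RS.pos (y.trans (reflLin α)) ⊆ PetersonTranslate RS.pos S α := by
  classical
  intro β hβ
  obtain ⟨hβpos, hβinv0⟩ := hβ
  obtain ⟨hαpos, hαinv⟩ := hα
  have hαroot : α ∈ RS.roots := RS.pos_subset hαpos
  have hβroot : β ∈ RS.roots := RS.pos_subset hβpos
  have hα0 : α ≠ 0 := RSAux.root_ne_zero RS hαroot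
  have hαα := RSAux.inner_self_pos_of_root RS hαroot
  have hsymm := RSAux.weyl_symm_mem RS hy
  obtain ⟨m, hm⟩ := RS.crystallographic α hαroot β hβroot
  have hcoef : 2 * ⟪α, β⟫ / ⟪α, α⟫ = (m : ℝ) := by
    rw [hm, mul_div_assoc, div_self (ne_of_gt hαα), mul_one]
  have hβinv : -(y.symm (β - (m : ℝ) • α)) ∈ RS.pos := by
    have e1 : (y.trans (reflLin α)).symm β = y.symm ((reflLin α).symm β) := rfl
    rw [e1, RSAux.reflLin_symm, RSAux.reflLin_apply hα0, hcoef] at hβinv0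
    exact hβinv0
  set a : V := -(y.symm α) with ha
  set u : V := -(y.symm (β - (m : ℝ) • α)) with hu
  have hapos : a ∈ RS.pos := hαinv
  have hupos : u ∈ RS.pos := hβinv
  -- β is not a multiple of α
  have hpar : ∀ c : ℝ, β ≠ c • α := by
    intro c hc
    have hmA : (m : ℝ) * ⟪α, α⟫ = 2 * c * ⟪α, α⟫ := by
      rw [← hm, hc, real_inner_smul_right]; ring
    have hm2c : (m : ℝ) = 2 * c := mul_right_cancel₀ (ne_of_gt hαα) hmA
    rcases le_or_gt 0 c with h | h
    · have hue : u = (-c) • a := by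
        rw [hu, ha, hc]
        have e : c • α - (m : ℝ) • α = (-c) • α := by
          rw [hm2c]; module
        rw [e, map_smul]
        module
      exact RSAux.no_nonpos_rel RS hupos hupos hapos (c := -2 * c) (by linarith)
        (by rw [hue]; module)
    · exact RSAux.no_nonpos_rel RS hβpos hβpos hαpos (c := 2 * c) (by linarith)
        (by rw [hc]; module)
  have hne0 : ∀ j : ℤ, β + (j : ℝ) • α ≠ 0 := by
    intro j h
    exact hpar (-(j : ℝ)) (by linear_combination (norm := module) h)
  -- membership in S along the string, above index -m
  have key : ∀ j : ℤ, -m ≤ j → β + (j : ℝ) • α ∈ RS.pos → β + (j : ℝ) • α ∈ S := by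
    intro j hj hjpos
    apply hIy
    refine ⟨hjpos, ?_⟩
    have hy1 : -(y.symm (β + (j : ℝ) • α)) = u + ((m + j : ℤ) : ℝ) • a := by
      rw [hu, ha]
      have e : β + (j : ℝ) • α = (β - (m : ℝ) • α) + (((m + j : ℤ) : ℝ)) • α := by
        push_cast; module
      rw [e, map_add, map_smul]
      module
    rw [hy1]
    apply RSAux.pos_of_root_cone
    · have h1 : y.symm (β + (j : ℝ) • α) ∈ RS.roots := hsymm _ (RS.pos_subset hjpos)
      have h2 := RS.neg_mem _ h1
      rw [hy1] at h2
      exact h2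
    · refine RSAux.cone_add RS (RSAux.cone_of_pos RS hupos)
        (RSAux.cone_smul RS ?_ (RSAux.cone_of_pos RS hapos))
      have : (0 : ℤ) ≤ m + j := by omega
      exact_mod_cast this
  -- bottom of the string
  have hkex : ∃ i : ℕ, β - ((i : ℝ) + 1) • α ∉ RS.pos := by
    by_contra hcon
    push_neg at hcon
    have hinj0 : Function.Injective (fun i : ℕ => β - ((i : ℝ) + 1) • α) := by
      intro a b hab
      simp only at hab
      have e : ((a : ℝ) - b) • α = 0 := by linear_combination (norm := module) -hab
      rcases smul_eq_zero.mp e with h | h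
      · have : (a : ℝ) = (b : ℝ) := by linarith [sub_eq_zero.mp h]
        exact_mod_cast this
      · exact absurd h hα0
    exact (RS.finite.subset RS.pos_subset).not_infinite
      (Set.infinite_of_injective_forall_mem hinj0 hcon)
  set k := Nat.find hkex with hkdef
  have hk2 : β - ((k : ℝ) + 1) • α ∉ RS.pos := Nat.find_spec hkex
  have hk1 : ∀ i : ℕ, i ≤ k → β - (i : ℝ) • α ∈ RS.pos := by
    intro i hik
    match i with
    | 0 => simpa using hβpos
    | (n + 1) =>
      have h := Nat.find_min hkex (m := n) (by omega)
      rw [not_not] at h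
      have e : β - ((n + 1 : ℕ) : ℝ) • α = β - ((n : ℝ) + 1) • α := by push_cast; module
      rw [e]; exact h
  have hNex : ∃ i : ℕ, β + ((i : ℝ) + 1) • α ∉ RS.pos := by
    by_contra hcon
    push_neg at hcon
    have hinj0 : Function.Injective (fun i : ℕ => β + ((i : ℝ) + 1) • α) := by
      intro a b hab
      simp only at hab
      have e : ((a : ℝ) - b) • α = 0 := by linear_combination (norm := module) hab
      rcases smul_eq_zero.mp e with h | h
      · have : (a : ℝ) = (b : ℝ) := by linarith [sub_eq_zero.mp h]
        exact_mod_cast this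
      · exact absurd h hα0
    exact (RS.finite.subset RS.pos_subset).not_infinite
      (Set.infinite_of_injective_forall_mem hinj0 hcon)
  set N := Nat.find hNex with hNdef
  have hN2 : β + ((N : ℝ) + 1) • α ∉ RS.pos := Nat.find_spec hNex
  have hN1 : ∀ i : ℕ, i ≤ N → β + (i : ℝ) • α ∈ RS.pos := by
    intro i hik
    match i with
    | 0 => simpa using hβpos
    | (n + 1) =>
      have h := Nat.find_min hNex (m := n) (by omega)
      rw [not_not] at h
      have e : β + ((n + 1 : ℕ) : ℝ) • α = β + ((n : ℝ) + 1) • α := by push_cast; module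
      rw [e]; exact h
  -- the whole contiguous run
  have hrun : ∀ j : ℤ, -(k : ℤ) ≤ j → j ≤ (N : ℤ) → β + (j : ℝ) • α ∈ RS.pos := by
    intro j h1 h2
    rcases le_or_gt 0 j with h | h
    · obtain ⟨n, rfl⟩ : ∃ n : ℕ, j = (n : ℤ) := ⟨j.toNat, (Int.toNat_of_nonneg h).symm⟩
      have e : β + ((n : ℤ) : ℝ) • α = β + (n : ℝ) • α := by push_cast; module
      rw [e]; exact hN1 n (by exact_mod_cast h2)
    · obtain ⟨n, rfl⟩ : ∃ n : ℕ, j = -(n : ℤ) := ⟨(-j).toNat, by omega⟩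
      have e : β + (((-(n : ℤ)) : ℤ) : ℝ) • α = β - (n : ℝ) • α := by push_cast; module
      rw [e]; exact hk1 n (by omega)
  -- index of the reflected element from the bottom
  set g : ℕ := ((k : ℤ) - m).toNat with hgdef
  have hgN : g ≤ N := by
    rcases le_or_gt ((k : ℤ) - m) 0 with hcase | hcase
    · have : g = 0 := by omega
      omega
    · have hgz : (g : ℤ) = (k : ℤ) - m := by omega
      have hδpos : β - (k : ℝ) • α ∈ RS.pos := hk1 k le_rfl
      have hδroot := RS.pos_subset hδpos
      have hrefl := RS.reflect_mem α hαroot _ hδroot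
      have hco : 2 * ⟪α, β - (k : ℝ) • α⟫ / ⟪α, α⟫ = (m : ℝ) - 2 * k := by
        have e : 2 * ⟪α, β - (k : ℝ) • α⟫ = ((m : ℝ) - 2 * k) * ⟪α, α⟫ := by
          rw [inner_sub_right, real_inner_smul_right]
          linear_combination hm
        rw [e, mul_div_assoc, div_self (ne_of_gt hαα), mul_one]
      rw [hco] at hrefl
      have hδ'root : β + (g : ℝ) • α ∈ RS.roots := by
        have e : β - (k : ℝ) • α - ((m : ℝ) - 2 * k) • α = β + (g : ℝ) • α := by
          have e2 : (g : ℝ) = (k : ℝ) - m := by exact_mod_cast hgz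
          rw [e2]; module
        rwa [e] at hrefl
      have hroots : ∀ i : ℕ, i ≤ g → β + (i : ℝ) • α ∈ RS.roots :=
        RSAux.string_unbroken RS hαroot hβroot hne0 hδ'root
      have hposs : ∀ i : ℕ, i ≤ g → β + (i : ℝ) • α ∈ RS.pos := by
        intro i hig
        rcases RS.pos_total _ (hroots i hig) with h' | h'
        · exact h'
        · exact (RSAux.no_nonpos_rel RS h' hβpos hαpos (c := -(i : ℝ))
            (neg_nonpos.mpr (by positivity)) (by module)).elim
      by_contra hcon
      push_neg at hcon
      apply hN2
      have := hposs (N + 1) (by omega)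
      have e : β + ((N + 1 : ℕ) : ℝ) • α = β + ((N : ℝ) + 1) • α := by push_cast; module
      rwa [e] at this
  -- assemble Peterson translate membership
  refine ⟨β - (k : ℝ) • α, hk1 k le_rfl, ?_, k, ?_, ?_⟩
  · have e : β - (k : ℝ) • α - α = β - ((k : ℝ) + 1) • α := by module
    rw [e]; exact hk2
  · have e : ((k : ℕ) : ℤ) • α = (k : ℝ) • α := by
      rw [← Int.cast_smul_eq_zsmul ℝ]; push_cast; ring_nf
    rw [e]; module
  · -- counting
    set δ : V := β - (k : ℝ) • α with hδdef
    have hrunδ : ∀ j : ℤ, 0 ≤ j → j ≤ (k : ℤ) + N → δ + j • α ∈ RS.pos := by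
      intro j h1 h2
      have e : δ + j • α = β + ((j - k : ℤ) : ℝ) • α := by
        rw [← Int.cast_smul_eq_zsmul ℝ j α, hδdef]; push_cast; module
      rw [e]; exact hrun (j - (k : ℤ)) (by omega) (by omega)
    have hmemStr : ∀ j : ℕ, j ≤ k + N → δ + (j : ℝ) • α ∈ {γ | SameString RS.pos α δ γ} := by
      intro j hj
      have hz : δ + (j : ℝ) • α = δ + ((j : ℕ) : ℤ) • α := by
        rw [← Int.cast_smul_eq_zsmul ℝ]; norm_cast
      refine Set.mem_setOf.mpr ⟨hk1 k le_rfl, ?_, (j : ℤ), hz, ?_⟩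
      · rw [hz]; exact hrunδ j (by omega) (by omega)
      · intro j' h1 h2
        have hj0 : (0 : ℤ) ≤ (j : ℤ) := Int.ofNat_nonneg j
        rw [min_eq_left hj0] at h1
        rw [max_eq_right hj0] at h2
        exact hrunδ j' h1 (by omega)
    have hinj : Function.Injective (fun j : ℕ => δ + (j : ℝ) • α) := by
      intro a b hab
      simp only at hab
      have e : ((a : ℝ) - b) • α = 0 := by linear_combination (norm := module) hab
      rcases smul_eq_zero.mp e with h | h
      · have : (a : ℝ) = (b : ℝ) := by linarith [sub_eq_zero.mp h]
        exact_mod_cast this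
      · exact absurd h hα0
    have hE : (fun j : ℕ => δ + (j : ℝ) • α) '' Set.Icc g (k + N) ⊆
        S ∩ {γ | SameString RS.pos α δ γ} := by
      rintro x ⟨j, ⟨hj1, hj2⟩, rfl⟩
      refine ⟨?_, hmemStr j hj2⟩
      show δ + (j : ℝ) • α ∈ S
      have e : δ + (j : ℝ) • α = β + (((j : ℤ) - k : ℤ) : ℝ) • α := by
        rw [hδdef]; push_cast; module
      rw [e]
      refine key ((j : ℤ) - k) (by omega) ?_
      exact hrun ((j : ℤ) - k) (by omega) (by omega)
    have hfin : (S ∩ {γ | SameString RS.pos α δ γ}).Finite :=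
      (RS.finite.subset RS.pos_subset).subset (fun x hx => hS.1 hx.1)
    have hcard1 : ((fun j : ℕ => δ + (j : ℝ) • α) '' Set.Icc g (k + N)).ncard ≤
        (S ∩ {γ | SameString RS.pos α δ γ}).ncard := Set.ncard_le_ncard hE hfin
    rw [Set.ncard_image_of_injective _ hinj] at hcard1
    have hIcc : (Set.Icc g (k + N)).ncard = (k + N) + 1 - g := by
      rw [← Finset.coe_Icc, Set.ncard_coe_finset, Nat.card_Icc]
    omega
end

section
/- In the root system C_n with positive roots {e_j − e_i : 1 ≤ i < j ≤ n} ∪ {e_i + e_j : 1 ≤ i ≤ j ≤ n}, a short positive root α lies in the subsystem A_{n−1} = {e_j − e_i} if and only if there exists a positive long root β such that the roots of C_n lying in span{α, β} form a root system of type C_2 with α and β as its short and long simple roots; moreover, when α = e_j − e_i with i < j, the root β = 2e_i is the unique such root. -/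
open scoped RealInnerProductSpace

namespace StmtCn

/-- The standard basis vector `e i` of `ℝⁿ`. -/
noncomputable def e {n : ℕ} (i : Fin n) : EuclideanSpace ℝ (Fin n) :=
  EuclideanSpace.single i 1

/-- The positive roots of `Cₙ`: `e_j - e_i` and `e_i + e_j` for `i < j`, and `2eᵢ`. -/
noncomputable def CnPos (n : ℕ) : Set (EuclideanSpace ℝ (Fin n)) :=
  {v | (∃ i j : Fin n, i < j ∧ (v = e j - e i ∨ v = e i + e j)) ∨ ∃ i : Fin n, v = e i + e i}

/-- The roots of `Cₙ`. -/
noncomputable def CnRoots (n : ℕ) : Set (EuclideanSpace ℝ (Fin n)) :=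
  {v | v ∈ CnPos n ∨ -v ∈ CnPos n}

lemma inner_e {n : ℕ} (a b : Fin n) : ⟪e a, e b⟫ = if b = a then (1:ℝ) else 0 := by
  simp [e, EuclideanSpace.inner_single_left]
  split_ifs <;> simp_all

lemma inner_sub2 {n : ℕ} (i j : Fin n) (h : i ≠ j) : ⟪e j - e i, e j - e i⟫ = (2:ℝ) := by
  simp only [inner_sub_left, inner_sub_right, inner_e, if_neg h, if_neg h.symm]
  norm_num

lemma inner_add2 {n : ℕ} (i j : Fin n) (h : i ≠ j) : ⟪e i + e j, e i + e j⟫ = (2:ℝ) := by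
  simp only [inner_add_left, inner_add_right, inner_e, if_neg h, if_neg h.symm]
  norm_num

lemma inner_long {n : ℕ} (k : Fin n) : ⟪e k + e k, e k + e k⟫ = (4:ℝ) := by
  simp only [inner_add_left, inner_add_right, inner_e]
  norm_num

lemma pos_norm {n : ℕ} {γ : EuclideanSpace ℝ (Fin n)} (h : γ ∈ CnPos n) :
    ⟪γ, γ⟫ = (2:ℝ) ∨ ⟪γ, γ⟫ = (4:ℝ) := by
  rcases h with ⟨a, b, hab, h | h⟩ | ⟨a, h⟩
  · exact Or.inl (h ▸ inner_sub2 a b hab.ne)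
  · exact Or.inl (h ▸ inner_add2 a b hab.ne)
  · exact Or.inr (h ▸ inner_long a)

lemma roots_norm {n : ℕ} {γ : EuclideanSpace ℝ (Fin n)} (h : γ ∈ CnRoots n) :
    ⟪γ, γ⟫ = (2:ℝ) ∨ ⟪γ, γ⟫ = (4:ℝ) := by
  rcases h with h | h
  · exact pos_norm h
  · have := pos_norm h
    rwa [inner_neg_neg] at this

lemma long_form {n : ℕ} {β : EuclideanSpace ℝ (Fin n)} (h : β ∈ CnPos n)
    (h4 : ⟪β, β⟫ = (4:ℝ)) : ∃ k, β = e k + e k := by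
  rcases h with ⟨a, b, hab, h | h⟩ | hk
  · rw [h, inner_sub2 a b hab.ne] at h4; norm_num at h4
  · rw [h, inner_add2 a b hab.ne] at h4; norm_num at h4
  · exact hk

lemma coord_zero {n : ℕ} {i j : Fin n} {γ : EuclideanSpace ℝ (Fin n)}
    (hγ : γ ∈ (Submodule.span ℝ {e j - e i, e i + e i} : Submodule ℝ _))
    (a : Fin n) (hai : a ≠ i) (haj : a ≠ j) : γ a = 0 := by
  induction hγ using Submodule.span_induction with
  | mem x hx =>
      rcases hx with rfl | rfl <;> simp [e, hai, haj]
  | zero => rfl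
  | add x y _ _ hx hy => show x a + y a = 0; rw [hx, hy, add_zero]
  | smul c x _ hx => show c * x a = 0; rw [hx, mul_zero]

lemma pos_in {n : ℕ} {i j : Fin n} (hij : i < j) {γ : EuclideanSpace ℝ (Fin n)}
    (hpos : γ ∈ CnPos n) (h0 : ∀ a, a ≠ i → a ≠ j → γ a = 0) :
    γ = e j - e i ∨ γ = e i + e j ∨ γ = e i + e i ∨ γ = e j + e j := by
  have key : ∀ a : Fin n, γ a ≠ 0 → a = i ∨ a = j := by
    intro a ha
    by_contra hc
    push_neg at hc
    exact ha (h0 a hc.1 hc.2)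
  rcases hpos with ⟨a, b, hab, h | h⟩ | ⟨a, h⟩
  · have ha : a = i ∨ a = j := by
      apply key; rw [h]; simp [e, hab.ne, hab.ne']
    have hb : b = i ∨ b = j := by
      apply key; rw [h]; simp [e, hab.ne, hab.ne']
    rcases ha with rfl | rfl <;> rcases hb with rfl | rfl
    · exact absurd hab (lt_irrefl _)
    · exact Or.inl h
    · exact absurd (hab.trans hij) (lt_irrefl _)
    · exact absurd hab (lt_irrefl _)
  · have ha : a = i ∨ a = j := by
      apply key; rw [h]; simp [e, hab.ne, hab.ne']
    have hb : b = i ∨ b = j := by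
      apply key; rw [h]; simp [e, hab.ne, hab.ne']
    rcases ha with rfl | rfl <;> rcases hb with rfl | rfl
    · exact absurd hab (lt_irrefl _)
    · exact Or.inr (Or.inl h)
    · exact absurd (hab.trans hij) (lt_irrefl _)
    · exact absurd hab (lt_irrefl _)
  · have ha : a = i ∨ a = j := by
      apply key; rw [h]; simp [e]
    rcases ha with rfl | rfl
    · exact Or.inr (Or.inr (Or.inl h))
    · exact Or.inr (Or.inr (Or.inr h))

lemma span_roots {n : ℕ} {i j : Fin n} (hij : i < j) :
    {γ | γ ∈ CnRoots n ∧ γ ∈ (Submodule.span ℝ {e j - e i, e i + e i} : Submodule ℝ _)} =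
      ({e j - e i, -(e j - e i), e i + e i, -(e i + e i),
        (e j - e i) + (e i + e i), -((e j - e i) + (e i + e i)),
        (2 : ℝ) • (e j - e i) + (e i + e i), -((2 : ℝ) • (e j - e i) + (e i + e i))} :
        Set (EuclideanSpace ℝ (Fin n))) := by
  have hplus : (e j - e i) + (e i + e i) = e i + e j := by module
  have h2 : (2 : ℝ) • (e j - e i) + (e i + e i) = e j + e j := by module
  have hαmem : e j - e i ∈ (Submodule.span ℝ {e j - e i, e i + e i} : Submodule ℝ _) :=
    Submodule.subset_span (Set.mem_insert _ _)
  have hβmem : e i + e i ∈ (Submodule.span ℝ {e j - e i, e i + e i} : Submodule ℝ _) :=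
    Submodule.subset_span (Set.mem_insert_of_mem _ rfl)
  apply Set.eq_of_subset_of_subset
  · rintro γ ⟨hroot, hspan⟩
    have h0 : ∀ a, a ≠ i → a ≠ j → γ a = 0 := fun a hai haj => coord_zero hspan a hai haj
    simp only [Set.mem_insert_iff, Set.mem_singleton_iff]
    rcases hroot with hpos | hneg
    · rcases pos_in hij hpos h0 with h | h | h | h
      · exact Or.inl h
      · exact Or.inr (Or.inr (Or.inr (Or.inr (Or.inl (hplus ▸ h)))))
      · exact Or.inr (Or.inr (Or.inl h))
      · exact Or.inr (Or.inr (Or.inr (Or.inr (Or.inr (Or.inr (Or.inl (h2 ▸ h)))))))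
    · have h0' : ∀ a, a ≠ i → a ≠ j → (-γ) a = 0 := by
        intro a hai haj
        show -(γ a) = 0
        rw [h0 a hai haj, neg_zero]
      rcases pos_in hij hneg h0' with h | h | h | h
      all_goals rw [neg_eq_iff_eq_neg] at h
      · exact Or.inr (Or.inl h)
      · exact Or.inr (Or.inr (Or.inr (Or.inr (Or.inr (Or.inl (by rw [h, hplus]))))))
      · exact Or.inr (Or.inr (Or.inr (Or.inl h)))
      · exact Or.inr (Or.inr (Or.inr (Or.inr (Or.inr (Or.inr (Or.inr (by rw [h, h2])))))))
  · intro γ hγ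
    simp only [Set.mem_insert_iff, Set.mem_singleton_iff] at hγ
    have rα : e j - e i ∈ CnRoots n := Or.inl (Or.inl ⟨i, j, hij, Or.inl rfl⟩)
    have rβ : e i + e i ∈ CnRoots n := Or.inl (Or.inr ⟨i, rfl⟩)
    have rαβ : (e j - e i) + (e i + e i) ∈ CnRoots n := by
      rw [hplus]; exact Or.inl (Or.inl ⟨i, j, hij, Or.inr rfl⟩)
    have r2αβ : (2 : ℝ) • (e j - e i) + (e i + e i) ∈ CnRoots n := by
      rw [h2]; exact Or.inl (Or.inr ⟨j, rfl⟩)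
    have neg_root : ∀ v : EuclideanSpace ℝ (Fin n), v ∈ CnRoots n → -v ∈ CnRoots n := by
      rintro v (hv | hv)
      · exact Or.inr (by rwa [neg_neg])
      · exact Or.inl hv
    have sαβ : (e j - e i) + (e i + e i) ∈
        (Submodule.span ℝ {e j - e i, e i + e i} : Submodule ℝ _) :=
      Submodule.add_mem _ hαmem hβmem
    have s2αβ : (2 : ℝ) • (e j - e i) + (e i + e i) ∈
        (Submodule.span ℝ {e j - e i, e i + e i} : Submodule ℝ _) :=
      Submodule.add_mem _ (Submodule.smul_mem _ _ hαmem) hβmem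
    rcases hγ with rfl | rfl | rfl | rfl | rfl | rfl | rfl | rfl
    · exact ⟨rα, hαmem⟩
    · exact ⟨neg_root _ rα, Submodule.neg_mem _ hαmem⟩
    · exact ⟨rβ, hβmem⟩
    · exact ⟨neg_root _ rβ, Submodule.neg_mem _ hβmem⟩
    · exact ⟨rαβ, sαβ⟩
    · exact ⟨neg_root _ rαβ, Submodule.neg_mem _ sαβ⟩
    · exact ⟨r2αβ, s2αβ⟩
    · exact ⟨neg_root _ r2αβ, Submodule.neg_mem _ s2αβ⟩

lemma inner_e_long {n : ℕ} (a k : Fin n) : ⟪e a, e k + e k⟫ = if k = a then (2:ℝ) else 0 := by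
  simp only [inner_add_right, inner_e]
  split <;> norm_num

lemma expand_inner {n : ℕ} (α β : EuclideanSpace ℝ (Fin n)) :
    ⟪(2:ℝ) • α + β, (2:ℝ) • α + β⟫ = 4 * ⟪α, α⟫ + 4 * ⟪α, β⟫ + ⟪β, β⟫ := by
  simp only [inner_add_left, inner_add_right, real_inner_smul_left, real_inner_smul_right,
    real_inner_comm β α]
  ring

/-- In `Cₙ`, a short positive root `α` lies in the subsystem
`A_{n-1} = {e_j - e_i}` iff there is a positive long root `β` such that the roots of `Cₙ`
in `span{α, β}` form a root system of type `C₂` with `α`, `β` its short and long simple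
roots, i.e. the roots in the span are exactly `±α, ±β, ±(α+β), ±(2α+β)`; moreover when
`α = e_j - e_i` with `i < j`, the root `β = 2eᵢ` is the unique such root. -/
theorem short_root_in_A_iff (n : ℕ) (α : EuclideanSpace ℝ (Fin n))
    (hα : α ∈ CnPos n) (hshort : ⟪α, α⟫ = (2 : ℝ)) :
    ((∃ i j : Fin n, i < j ∧ α = e j - e i) ↔
      ∃ β ∈ CnPos n, ⟪β, β⟫ = (4 : ℝ) ∧
        {γ | γ ∈ CnRoots n ∧ γ ∈ (Submodule.span ℝ {α, β} : Submodule ℝ _)} =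
          ({α, -α, β, -β, α + β, -(α + β), (2 : ℝ) • α + β, -((2 : ℝ) • α + β)} :
            Set (EuclideanSpace ℝ (Fin n)))) ∧
    (∀ i j : Fin n, i < j → α = e j - e i →
      ∀ β ∈ CnPos n,
        (⟪β, β⟫ = (4 : ℝ) ∧
          {γ | γ ∈ CnRoots n ∧ γ ∈ (Submodule.span ℝ {α, β} : Submodule ℝ _)} =
            ({α, -α, β, -β, α + β, -(α + β), (2 : ℝ) • α + β, -((2 : ℝ) • α + β)} :
              Set (EuclideanSpace ℝ (Fin n)))) →
        β = e i + e i) := by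
  constructor
  · constructor
    · rintro ⟨i, j, hij, rfl⟩
      exact ⟨e i + e i, Or.inr ⟨i, rfl⟩, inner_long i, span_roots hij⟩
    · rintro ⟨β, hβ, hβ4, hset⟩
      rcases hα with ⟨i, j, hij, hα' | hα'⟩ | ⟨k, hk⟩
      · exact ⟨i, j, hij, hα'⟩
      · exfalso
        obtain ⟨k, rfl⟩ := long_form hβ hβ4
        have hroot : ((2:ℝ) • α + e k + e k) ∈ CnRoots n := by
          have h : ((2:ℝ) • α + (e k + e k)) ∈
              {γ | γ ∈ CnRoots n ∧ γ ∈ (Submodule.span ℝ {α, e k + e k} : Submodule ℝ _)} := by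
            rw [hset]
            exact Or.inr (Or.inr (Or.inr (Or.inr (Or.inr (Or.inr (Or.inl rfl))))))
          rw [← add_assoc] at h
          exact h.1
        have hv : ⟪α, e k + e k⟫ = (if k = i then (2:ℝ) else 0) + (if k = j then 2 else 0) := by
          rw [hα']
          simp only [inner_add_left, inner_e_long]
        have h12 : ⟪(2:ℝ) • α + (e k + e k), (2:ℝ) • α + (e k + e k)⟫
            = 12 + 4 * ⟪α, e k + e k⟫ := by
          rw [expand_inner, hshort, hβ4]; ring
        rw [← add_assoc] at h12
        rcases roots_norm hroot with h | h <;> rw [h12, hv] at h <;>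
          split_ifs at h <;> norm_num at h
      · rw [hk, inner_long] at hshort
        norm_num at hshort
  · rintro i j hij rfl β hβ ⟨hβ4, hset⟩
    obtain ⟨k, rfl⟩ := long_form hβ hβ4
    by_cases hki : k = i
    · rw [hki]
    exfalso
    have hroot : ((2:ℝ) • (e j - e i) + e k + e k) ∈ CnRoots n := by
      have h : ((2:ℝ) • (e j - e i) + (e k + e k)) ∈
          {γ | γ ∈ CnRoots n ∧
            γ ∈ (Submodule.span ℝ {e j - e i, e k + e k} : Submodule ℝ _)} := by
        rw [hset]
        exact Or.inr (Or.inr (Or.inr (Or.inr (Or.inr (Or.inr (Or.inl rfl))))))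
      rw [← add_assoc] at h
      exact h.1
    have hv : ⟪e j - e i, e k + e k⟫
        = (if k = j then (2:ℝ) else 0) - (if k = i then 2 else 0) := by
      simp only [inner_sub_left, inner_e_long]
    have h12 : ⟪(2:ℝ) • (e j - e i) + (e k + e k), (2:ℝ) • (e j - e i) + (e k + e k)⟫
        = 12 + 4 * ⟪e j - e i, e k + e k⟫ := by
      rw [expand_inner, hshort, hβ4]; ring
    rw [← add_assoc] at h12
    rcases roots_norm hroot with h | h <;> rw [h12, hv] at h <;>
      split_ifs at h <;> norm_num at h

end StmtCn
end

section
/- Duality of biconvexity: a subset S of R⁺ is biconvex in R if and only if the set of coroots S̆ = {2α/(α,α) : α ∈ S} is biconvex in the dual root system R̆; furthermore the hyperplane arrangements A(S) and A(S̆) coincide. -/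
open scoped RealInnerProductSpace

variable {V : Type*} [NormedAddCommGroup V] [InnerProductSpace ℝ V]

/-- The coroot `ᾰ = 2α/(α, α)` of a root `α`. -/
noncomputable def coroot (α : V) : V := (2 / ⟪α, α⟫) • α

namespace BCD
variable {V : Type*} [NormedAddCommGroup V] [InnerProductSpace ℝ V]

lemma inner_self_pos' {x : V} (h : x ≠ 0) : 0 < ⟪x, x⟫ :=
  lt_of_le_of_ne real_inner_self_nonneg (Ne.symm (inner_self_ne_zero.mpr h))

structure PosSystem (V : Type*) [NormedAddCommGroup V] [InnerProductSpace ℝ V] where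
  R : Set V
  P : Set V
  u0 : V
  finR : R.Finite
  zeroR : (0 : V) ∉ R
  negR : ∀ α ∈ R, -α ∈ R
  crys : ∀ α ∈ R, ∀ β ∈ R, ∃ n : ℤ, 2 * ⟪α, β⟫ = (n : ℝ) * ⟪α, α⟫
  reflR : ∀ α ∈ R, ∀ β ∈ R, β - (2 * ⟪α, β⟫ / ⟪α, α⟫) • α ∈ R
  PR : P ⊆ R
  u0pos : ∀ α ∈ P, 0 < ⟪u0, α⟫
  total : ∀ α ∈ R, α ∈ P ∨ -α ∈ P

namespace PosSystem

variable (K : PosSystem V)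

lemma ne_zero {α : V} (h : α ∈ K.R) : α ≠ 0 := fun e => K.zeroR (e ▸ h)

lemma ipos {α : V} (h : α ∈ K.R) : 0 < ⟪α, α⟫ := inner_self_pos' (K.ne_zero h)

lemma memP_iff {α : V} (h : α ∈ K.R) : α ∈ K.P ↔ 0 < ⟪K.u0, α⟫ := by
  constructor
  · exact fun hp => K.u0pos α hp
  · intro hpos
    rcases K.total α h with h1 | h1
    · exact h1
    · have := K.u0pos _ h1; rw [inner_neg_right] at this; linarith

lemma notP_neg {α : V} (h : α ∈ K.R) (h2 : α ∉ K.P) : -α ∈ K.P :=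
  (K.total α h).resolve_left h2

lemma addP {α β : V} (hα : α ∈ K.P) (hβ : β ∈ K.P) (hR : α + β ∈ K.R) : α + β ∈ K.P := by
  rw [K.memP_iff hR, inner_add_right]
  have h1 := K.u0pos α hα; have h2 := K.u0pos β hβ; linarith

lemma ratio {α β : V} (hα : α ∈ K.R) (hβ : β ∈ K.R) {k : ℝ} (hk : β = k • α) :
    k = 1 ∨ k = 2 ∨ k = 1/2 ∨ k = -1 ∨ k = -2 ∨ k = -(1/2) := by
  have ha := K.ipos hα
  have ha' : ⟪α, α⟫ ≠ 0 := ne_of_gt ha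
  have hk0 : k ≠ 0 := by
    intro h; rw [h, zero_smul] at hk; exact K.ne_zero hβ hk
  obtain ⟨n, hn⟩ := K.crys α hα β hβ
  obtain ⟨m, hm⟩ := K.crys β hβ α hα
  rw [hk, real_inner_smul_right] at hn
  rw [hk, real_inner_smul_left, real_inner_smul_left, real_inner_smul_right] at hm
  have h2k : 2 * k = (n : ℝ) :=
    mul_right_cancel₀ ha' (by linarith)
  have h2k2 : 2 * k = (m : ℝ) * (k * k) :=
    mul_right_cancel₀ ha' (by ring_nf; ring_nf at hm; linarith)
  have hkk : 4 * (k*k) = ((m:ℝ) * n) * (k*k) := by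
    linear_combination (2*k) * h2k + (n:ℝ) * h2k2
  have h4 : (4:ℝ) = (m:ℝ) * n :=
    mul_right_cancel₀ (by positivity) hkk
  have h4' : (4:ℤ) = m * n := by exact_mod_cast h4
  have hn0 : n ≠ 0 := by
    intro h; rw [h] at h2k; push_cast at h2k; exact hk0 (by linarith)
  have hdvd : n ∣ 4 := Dvd.intro_left m h4'.symm
  have hb1 : n ≤ 4 := Int.le_of_dvd (by norm_num) hdvd
  have hb2 : -4 ≤ n := by
    have := Int.le_of_dvd (show (0:ℤ) < 4 by norm_num) ((neg_dvd).mpr hdvd)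
    omega
  have hk2 : k = (n:ℝ)/2 := by linarith
  interval_cases n <;> first
    | omega
    | (push_cast at hk2; rw [hk2]; norm_num)

lemma sub_mem {α β : V} (hα : α ∈ K.R) (hβ : β ∈ K.R) (hp : 0 < ⟪α, β⟫) (hne : α ≠ β) :
    α - β ∈ K.R := by
  have ha := K.ipos hα; have hb := K.ipos hβ
  have ha' : ⟪α, α⟫ ≠ 0 := ne_of_gt ha
  have hb' : ⟪β, β⟫ ≠ 0 := ne_of_gt hb
  obtain ⟨n1, h1⟩ := K.crys α hα β hβ
  obtain ⟨n2, h2⟩ := K.crys β hβ α hα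
  have hba : ⟪β, α⟫ = ⟪α, β⟫ := real_inner_comm α β
  rw [hba] at h2
  have hn1pos : 0 < (n1:ℝ) := by nlinarith
  have hn2pos : 0 < (n2:ℝ) := by nlinarith
  by_cases e1 : n1 = 1
  · have hr := K.reflR α hα β hβ
    have hc : 2 * ⟪α, β⟫ / ⟪α, α⟫ = 1 := by
      rw [h1, e1]; push_cast; field_simp
    rw [hc, one_smul] at hr
    have := K.negR _ hr
    rwa [neg_sub] at this
  by_cases e2 : n2 = 1
  · have hr := K.reflR β hβ α hα
    have hc : 2 * ⟪β, α⟫ / ⟪β, β⟫ = 1 := by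
      rw [hba, h2, e2]; push_cast; field_simp
    rwa [hc, one_smul] at hr
  -- both coefficients are at least 2
  have hn1i : 0 < n1 := by exact_mod_cast hn1pos
  have hn2i : 0 < n2 := by exact_mod_cast hn2pos
  have hn1' : (2:ℝ) ≤ n1 := by exact_mod_cast (by omega : (2:ℤ) ≤ n1)
  have hn2' : (2:ℝ) ≤ n2 := by exact_mod_cast (by omega : (2:ℤ) ≤ n2)
  have he4 : 4 * (⟪α, β⟫ * ⟪α, β⟫) = (n1:ℝ) * (n2:ℝ) * (⟪α, α⟫ * ⟪β, β⟫) := by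
    linear_combination (2 * ⟪α, β⟫) * h2 + ((n2:ℝ) * ⟪β, β⟫) * h1
  have hcs : ⟪α, β⟫ * ⟪α, β⟫ ≥ ⟪α, α⟫ * ⟪β, β⟫ := by
    nlinarith [he4, mul_pos ha hb,
      mul_nonneg (by linarith : (0:ℝ) ≤ (n1:ℝ) - 2) (by linarith : (0:ℝ) ≤ (n2:ℝ) - 2)]
  set w : V := β - (⟪α, β⟫ / ⟪α, α⟫) • α with hw
  have hww : ⟪w, w⟫ = ⟪β, β⟫ - ⟪α, β⟫ * ⟪α, β⟫ / ⟪α, α⟫ := by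
    rw [hw]
    simp only [inner_sub_left, inner_sub_right, real_inner_smul_left, real_inner_smul_right]
    rw [real_inner_comm β α]
    field_simp
    ring
  have hwle : ⟪w, w⟫ ≤ 0 := by
    rw [hww, sub_nonpos, le_div_iff₀ ha]
    nlinarith [hcs]
  have hw0 : w = 0 := real_inner_self_nonpos.mp hwle
  have hkeq : β = (⟪α, β⟫ / ⟪α, α⟫) • α := by
    have := sub_eq_zero.mp hw0; exact this
  have hkpos : 0 < ⟪α, β⟫ / ⟪α, α⟫ := by positivity
  rcases K.ratio hα hβ hkeq with h | h | h | h | h | h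
  · exfalso; rw [h, one_smul] at hkeq; exact hne hkeq.symm
  · have : α - β = -α := by rw [hkeq, h]; module
    rw [this]; exact K.negR α hα
  · have : α - β = β := by rw [hkeq, h]; module
    rw [this]; exact hβ
  · exfalso; rw [h] at hkpos; linarith
  · exfalso; rw [h] at hkpos; linarith
  · exfalso; rw [h] at hkpos; linarith

lemma one_step {α : V} (hα : α ∈ K.R) :
    ∀ n : ℕ, 1 ≤ n → ∀ β : V, β ∈ K.R → (∀ t : ℝ, β ≠ t • α) →
      β - (n : ℝ) • α ∈ K.R → β - α ∈ K.R := by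
  intro n
  induction n using Nat.strong_induction_on with
  | _ n ih =>
    intro hn1 β hβ hnp hmem
    have ha := K.ipos hα
    rcases eq_or_lt_of_le hn1 with h1 | h1
    · rw [← h1] at hmem; push_cast at hmem; rwa [one_smul] at hmem
    · by_cases hip : 0 < ⟪β, α⟫
      · have hne : β ≠ α := by
          intro h; exact hnp 1 (by rw [h, one_smul])
        exact K.sub_mem hβ hα hip hne
      · push_neg at hip
        have hip' : ⟪α, β⟫ ≤ 0 := by rw [real_inner_comm]; exact hip
        have hxin : 0 < ⟪β - (n:ℝ) • α, -α⟫ := by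
          rw [inner_neg_right, inner_sub_left, real_inner_smul_left, real_inner_comm α β]
          have hn2 : (2:ℝ) ≤ (n:ℝ) := by exact_mod_cast h1
          nlinarith [hip', ha, hn2]
        have hxne : β - (n:ℝ) • α ≠ -α := by
          intro h
          refine hnp ((n:ℝ) - 1) ?_
          have : β = (n:ℝ) • α + -α := by
            rw [← h]; module
          rw [this, sub_smul, one_smul]; module
        have hstep := K.sub_mem hmem (K.negR α hα) hxin hxne
        have heq2 : β - (n:ℝ) • α - -α = β - ((n - 1 : ℕ):ℝ) • α := by
          push_cast [Nat.cast_sub (by omega : 1 ≤ n)]; module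
        rw [heq2] at hstep
        exact ih (n-1) (by omega) (by omega) β hβ hnp hstep

lemma string {α β : V} (hα : α ∈ K.R) (hβ : β ∈ K.R) (hnp : ∀ t : ℝ, β ≠ t • α)
    {n : ℕ} (hmem : β - (n:ℝ) • α ∈ K.R) : ∀ j : ℕ, j ≤ n → β - (j:ℝ) • α ∈ K.R := by
  intro j
  induction j with
  | zero => intro _; simpa using hβ
  | succ j ihj =>
    intro hj
    have hjn : j ≤ n := by omega
    have hβ' := ihj hjn
    have hnp' : ∀ t : ℝ, β - (j:ℝ) • α ≠ t • α := by
      intro t h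
      refine hnp (t + (j:ℝ)) ?_
      have := sub_eq_iff_eq_add.mp h
      rw [this]; module
    have hmem' : (β - (j:ℝ) • α) - ((n - j : ℕ):ℝ) • α ∈ K.R := by
      have e : (β - (j:ℝ) • α) - ((n - j : ℕ):ℝ) • α = β - (n:ℝ) • α := by
        push_cast [Nat.cast_sub hjn]; module
      rw [e]; exact hmem
    have hres := K.one_step hα (n - j) (by omega) _ hβ' hnp' hmem'
    have e2 : (β - (j:ℝ) • α) - α = β - ((j+1 : ℕ):ℝ) • α := by push_cast; module
    rwa [e2] at hres

end PosSystem

lemma cross (Q : ℕ → Prop) : ∀ m : ℕ, Q 0 → ¬ Q m → ∃ j, j + 1 ≤ m ∧ Q j ∧ ¬ Q (j+1) := by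
  intro m
  induction m with
  | zero => intro h0 h; exact absurd h0 h
  | succ m ih =>
    intro h0 h
    by_cases hm : Q m
    · exact ⟨m, le_refl _, hm, h⟩
    · obtain ⟨j, hj, a, b⟩ := ih h0 hm; exact ⟨j, by omega, a, b⟩

noncomputable def rr (α x : V) : V := x - (2 * ⟪α, x⟫ / ⟪α, α⟫) • α

lemma rr_rr {α : V} (hα : α ≠ 0) (x : V) : rr α (rr α x) = x := by
  have ha : ⟪α, α⟫ ≠ 0 := ne_of_gt (inner_self_pos' hα)
  unfold rr
  rw [inner_sub_right, real_inner_smul_right]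
  match_scalars <;> field_simp <;> ring

lemma rr_add (α x y : V) : rr α (x + y) = rr α x + rr α y := by
  unfold rr
  rw [inner_add_right]
  match_scalars <;> ring

lemma rr_adj (α x y : V) : ⟪rr α x, y⟫ = ⟪x, rr α y⟫ := by
  unfold rr
  rw [inner_sub_left, inner_sub_right, real_inner_smul_left, real_inner_smul_right,
    real_inner_comm α x, real_inner_comm x α]
  ring

lemma rr_self {α : V} (hα : α ≠ 0) : rr α α = -α := by
  have ha : ⟪α, α⟫ ≠ 0 := ne_of_gt (inner_self_pos' hα)
  unfold rr
  match_scalars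
  field_simp
  ring

lemma rr_two {α : V} (hα : α ≠ 0) : rr α ((2:ℝ) • α) = -((2:ℝ) • α) := by
  have ha : ⟪α, α⟫ ≠ 0 := ne_of_gt (inner_self_pos' hα)
  unfold rr
  rw [real_inner_smul_right]
  match_scalars
  field_simp
  ring

lemma rr_inj {α : V} (hα : α ≠ 0) : Function.Injective (rr α) := fun x y h => by
  rw [← rr_rr hα x, h, rr_rr hα]

namespace PosSystem
variable (K : PosSystem V)

def Indec (α : V) : Prop := α ∈ K.P ∧ ∀ β ∈ K.P, ∀ γ ∈ K.P, α ≠ β + γ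

lemma half_not {α : V} (h : K.Indec α) : (1/2 : ℝ) • α ∉ K.R := by
  intro hmem
  have hhalf : (1/2:ℝ) • α ∈ K.P := by
    rw [K.memP_iff hmem, real_inner_smul_right]
    have := K.u0pos α h.1; linarith
  exact h.2 _ hhalf _ hhalf (by module)

lemma nonprop {α β : V} (h : K.Indec α) (hβ : β ∈ K.P) (h1 : β ≠ α) (h2 : β ≠ (2:ℝ) • α) :
    ∀ t : ℝ, β ≠ t • α := by
  intro t ht
  have hαR := K.PR h.1; have hβR := K.PR hβ
  have hts := K.ratio hαR hβR ht
  have htpos : 0 < t := by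
    have hu1 := K.u0pos _ h.1; have hu2 := K.u0pos _ hβ
    rw [ht, real_inner_smul_right] at hu2
    nlinarith
  rcases hts with h' | h' | h' | h' | h' | h'
  · exact h1 (by rw [ht, h', one_smul])
  · exact h2 (by rw [ht, h'])
  · exact K.half_not h (by rw [ht, h'] at hβR; exact hβR)
  · rw [h'] at htpos; linarith
  · rw [h'] at htpos; linarith
  · rw [h'] at htpos; linarith

lemma stab {α β : V} (hI : K.Indec α) (hβ : β ∈ K.P) (h1 : β ≠ α) (h2 : β ≠ (2:ℝ) • α) :
    rr α β ∈ K.P ∧ rr α β ≠ α ∧ rr α β ≠ (2:ℝ) • α := by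
  have hαP := hI.1
  have hαR := K.PR hαP
  have hα0 := K.ne_zero hαR
  have ha := K.ipos hαR
  have ha' : ⟪α, α⟫ ≠ 0 := ne_of_gt ha
  have hβR := K.PR hβ
  have hnp := K.nonprop hI hβ h1 h2
  obtain ⟨n, hn⟩ := K.crys α hαR β hβR
  have hco : 2 * ⟪α, β⟫ / ⟪α, α⟫ = (n:ℝ) := by rw [hn]; field_simp
  have hrw : rr α β = β - (n:ℝ) • α := by rw [rr, hco]
  have hrR : rr α β ∈ K.R := K.reflR α hαR β hβR
  refine ⟨?_, ?_, ?_⟩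
  · by_cases hn0 : n ≤ 0
    · rw [K.memP_iff hrR, hrw, inner_sub_right, real_inner_smul_right]
      have hu1 := K.u0pos α hαP; have hu2 := K.u0pos β hβ
      have hcast : (n:ℝ) ≤ 0 := by exact_mod_cast hn0
      nlinarith
    · push_neg at hn0
      by_contra hnot
      set m := n.toNat with hm
      have hmn : (m:ℝ) = (n:ℝ) := by
        have h' : (m : ℤ) = n := Int.toNat_of_nonneg (le_of_lt hn0)
        exact_mod_cast h' 
      have hmemm : β - (m:ℝ) • α ∈ K.R := by rw [hmn, ← hrw]; exact hrR
      have hstr := K.string hαR hβR hnp hmemm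
      have hQm : ¬ (β - (m:ℝ) • α ∈ K.P) := by rw [hmn, ← hrw]; exact hnot
      obtain ⟨j, hjm, hQj, hQj1⟩ :=
        cross (fun j => β - (j:ℝ) • α ∈ K.P) m (by simpa using hβ) hQm
      have hyR : β - ((j+1 : ℕ):ℝ) • α ∈ K.R := hstr (j+1) hjm
      have hyP : -(β - ((j+1 : ℕ):ℝ) • α) ∈ K.P := K.notP_neg hyR hQj1
      have heq : α = (β - (j:ℝ) • α) + -(β - ((j+1 : ℕ):ℝ) • α) := by push_cast; module
      exact hI.2 _ hQj _ hyP heq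
  · intro he
    rw [hrw] at he
    refine hnp ((n:ℝ) + 1) ?_
    have h' := sub_eq_iff_eq_add.mp he
    rw [h']; module
  · intro he
    rw [hrw] at he
    refine hnp ((n:ℝ) + 2) ?_
    have h' := sub_eq_iff_eq_add.mp he
    rw [h']; module

end PosSystem



namespace PosSystem
variable (K : PosSystem V)

theorem exists_functional :
    ∀ N : ℕ, ∀ S : Set V, S.ncard = N → S ⊆ K.P → IsSumClosed K.P S →
      IsSumClosed K.P (K.P \ S) →
      ∃ u : V, (∀ γ ∈ K.P, ⟪u, γ⟫ ≠ 0) ∧ S = {γ ∈ K.P | ⟪u, γ⟫ < 0} := by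
  intro N
  induction N using Nat.strong_induction_on with
  | _ N ih =>
    intro S hcard hSP hSum hCo
    have hSfin : S.Finite := K.finR.subset (fun x hx => K.PR (hSP hx))
    rcases S.eq_empty_or_nonempty with rfl | hne
    · refine ⟨K.u0, fun γ hγ => ne_of_gt (K.u0pos γ hγ), ?_⟩
      ext γ
      simp only [Set.mem_setOf_eq, Set.mem_empty_iff_false, false_iff]
      rintro ⟨hγP, hγlt⟩
      exact absurd (K.u0pos γ hγP) (not_lt.mpr (le_of_lt hγlt))
    · obtain ⟨α, hαS, hmin⟩ := Set.exists_min_image S (fun x => ⟪K.u0, x⟫) hSfin hne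
      have hαP := hSP hαS
      have hαR := K.PR hαP
      have hα0 := K.ne_zero hαR
      have hI : K.Indec α := by
        refine ⟨hαP, ?_⟩
        rintro β hβP γ hγP heq
        have hu0β := K.u0pos β hβP
        have hu0γ := K.u0pos γ hγP
        have hsum : ⟪K.u0, α⟫ = ⟪K.u0, β⟫ + ⟪K.u0, γ⟫ := by rw [heq, inner_add_right]
        have hβγ : β ∈ S ∨ γ ∈ S := by
          by_contra hc
          push_neg at hc
          have h2 : β + γ ∈ K.P \ S :=
            hCo ⟨hβP, hc.1⟩ ⟨hγP, hc.2⟩ (by rw [← heq]; exact hαP)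
          exact h2.2 (heq ▸ hαS)
        rcases hβγ with h | h
        · have := hmin β h; linarith
        · have := hmin γ h; linarith
      set T : Set V := S \ {α, (2:ℝ) • α} with hT
      set S₂ : Set V := rr α '' T with hS₂def
      have memT : ∀ {x : V}, x ∈ T ↔ x ∈ S ∧ x ≠ α ∧ x ≠ (2:ℝ) • α := by
        intro x
        rw [hT]
        simp [Set.mem_diff, Set.mem_insert_iff, not_or, and_assoc]
      have memS₂ : ∀ {x : V}, x ∈ S₂ ↔ rr α x ∈ T := by
        intro x
        constructor
        · rintro ⟨z, hz, rfl⟩; rwa [rr_rr hα0]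
        · intro h; exact ⟨rr α x, h, rr_rr hα0 x⟩
      have hstabT : ∀ {x : V}, x ∈ T → rr α x ∈ K.P ∧ rr α x ≠ α ∧ rr α x ≠ (2:ℝ) • α := by
        intro x hx
        obtain ⟨hxS, hx1, hx2⟩ := memT.mp hx
        exact K.stab hI (hSP hxS) hx1 hx2
      have hS₂P : S₂ ⊆ K.P := by
        rintro x ⟨z, hz, rfl⟩; exact (hstabT hz).1
      have e2α : α + α = (2:ℝ) • α := by module
      have h2αS : (2:ℝ) • α ∈ K.P → (2:ℝ) • α ∈ S := by
        intro h
        have h' : α + α ∈ S := hSum hαS hαS (by rw [e2α]; exact h)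
        rw [← e2α]; exact h'
      have hPnotS₂ : ∀ {x : V}, x ∈ K.P → x ∉ S₂ → x ≠ α → x ≠ (2:ℝ) • α →
          rr α x ∈ K.P ∧ rr α x ∉ S ∧ rr α x ≠ α ∧ rr α x ≠ (2:ℝ) • α := by
        intro x hxP hxn hx1 hx2
        obtain ⟨hp, hna, hnb⟩ := K.stab hI hxP hx1 hx2
        refine ⟨hp, ?_, hna, hnb⟩
        intro hS'
        exact hxn (memS₂.mpr (memT.mpr ⟨hS', hna, hnb⟩))
      have hconv₂ : IsSumClosed K.P S₂ := by
        intro x y hx hy hxyP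
        have hxT := memS₂.mp hx
        have hyT := memS₂.mp hy
        have hxS := (memT.mp hxT).1
        have hyS := (memT.mp hyT).1
        have hsum_eq : rr α (x + y) = rr α x + rr α y := rr_add α x y
        have hxyR : x + y ∈ K.R := K.PR hxyP
        have hsR : rr α x + rr α y ∈ K.R := by
          rw [← hsum_eq]; exact K.reflR α hαR _ hxyR
        have hxP' : rr α x ∈ K.P := hSP hxS
        have hyP' : rr α y ∈ K.P := hSP hyS
        have hsP : rr α x + rr α y ∈ K.P := K.addP hxP' hyP' hsR
        have hsS : rr α x + rr α y ∈ S := hSum hxS hyS hsP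
        have hne1 : rr α x + rr α y ≠ α := fun h => hI.2 _ hxP' _ hyP' h.symm
        have hne2 : rr α x + rr α y ≠ (2:ℝ) • α := by
          intro h
          have e1 : x + y = rr α (rr α x + rr α y) := by
            rw [← hsum_eq, rr_rr hα0]
          rw [h, rr_two hα0] at e1
          have c1 := K.u0pos _ hxyP
          rw [e1, inner_neg_right] at c1
          have c2 := K.u0pos _ (h ▸ hsP)
          linarith
        have hmemT : rr α x + rr α y ∈ T := memT.mpr ⟨hsS, hne1, hne2⟩
        refine memS₂.mpr ?_
        rw [hsum_eq]; exact hmemT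
      have caseB : ∀ x y : V, (x = α ∨ x = (2:ℝ) • α) → x ∈ K.P → y ∈ K.P → y ∉ S₂ →
          y ≠ α → y ≠ (2:ℝ) • α → x + y ∈ K.P → rr α (x + y) ∈ T → False := by
        intro x y hx hxP hyP hyn hy1 hy2 hxyP hzT
        obtain ⟨hzS, hz1, hz2⟩ := memT.mp hzT
        obtain ⟨hyP', hynS, hy1', hy2'⟩ := hPnotS₂ hyP hyn hy1 hy2
        have hxS : x ∈ S := by
          rcases hx with rfl | rfl
          · exact hαS
          · exact h2αS hxP
        have hrx : rr α x = -x := by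
          rcases hx with rfl | rfl
          · exact rr_self hα0
          · exact rr_two hα0
        have he : rr α y = rr α (x + y) + x := by
          rw [rr_add, hrx]; abel
        have : rr α y ∈ S := by
          rw [he]
          exact hSum hzS hxS (by rw [← he]; exact hyP')
        exact hynS this
      have hcocon₂ : IsSumClosed K.P (K.P \ S₂) := by
        rintro x y ⟨hxP, hxn⟩ ⟨hyP, hyn⟩ hxyP
        refine ⟨hxyP, ?_⟩
        intro hmem
        have hzT : rr α (x + y) ∈ T := memS₂.mp hmem
        by_cases hx1 : x = α ∨ x = (2:ℝ) • α
        · by_cases hy1 : y = α ∨ y = (2:ℝ) • α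
          · have hxyR := K.PR hxyP
            have h3 : ∀ c : ℝ, c = 3 ∨ c = 4 → c • α ∉ K.R := by
              intro c hc hcR
              rcases K.ratio hαR hcR rfl with h | h | h | h | h | h <;>
                rcases hc with rfl | rfl <;> norm_num at h
            rcases hx1 with hx' | hx' <;> rcases hy1 with hy' | hy'
            · have e1 : x + y = (2:ℝ) • α := by rw [hx', hy']; module
              have hzP : rr α (x + y) ∈ K.P := hSP (memT.mp hzT).1
              rw [e1, rr_two hα0] at hzP
              have c1 := K.u0pos _ hzP
              rw [inner_neg_right] at c1
              have c2 := K.u0pos _ hxyP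
              rw [e1] at c2
              linarith
            · refine h3 3 (Or.inl rfl) ?_
              rw [show (3:ℝ) • α = x + y by rw [hx', hy']; module]; exact hxyR
            · refine h3 3 (Or.inl rfl) ?_
              rw [show (3:ℝ) • α = x + y by rw [hx', hy']; module]; exact hxyR
            · refine h3 4 (Or.inr rfl) ?_
              rw [show (4:ℝ) • α = x + y by rw [hx', hy']; module]; exact hxyR
          · push_neg at hy1
            exact caseB x y hx1 hxP hyP hyn hy1.1 hy1.2 hxyP hzT
        · by_cases hy1 : y = α ∨ y = (2:ℝ) • α
          · push_neg at hx1
            refine caseB y x hy1 hyP hxP hxn hx1.1 hx1.2 (by rwa [add_comm]) ?_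
            rwa [add_comm]
          · push_neg at hx1
            push_neg at hy1
            obtain ⟨hxP', hxnS, _, _⟩ := hPnotS₂ hxP hxn hx1.1 hx1.2
            obtain ⟨hyP', hynS, _, _⟩ := hPnotS₂ hyP hyn hy1.1 hy1.2
            have hzS : rr α (x + y) ∈ S := (memT.mp hzT).1
            rw [rr_add] at hzS
            have hsP : rr α x + rr α y ∈ K.P := hSP hzS
            exact (hCo ⟨hxP', hxnS⟩ ⟨hyP', hynS⟩ hsP).2 hzS
      have hαnotS₂ : α ∉ S₂ := by
        intro h
        have hmem := memT.mp (memS₂.mp h)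
        rw [rr_self hα0] at hmem
        have hnegP : -α ∈ K.P := hSP hmem.1
        have c1 := K.u0pos _ hnegP
        rw [inner_neg_right] at c1
        have c2 := K.u0pos _ hαP
        linarith
      have hTS : T ⊂ S := by
        refine ⟨Set.diff_subset, fun hsub => ?_⟩
        exact (memT.mp (hsub hαS)).2.1 rfl
      have hS₂card : S₂.ncard < N := by
        rw [hS₂def, Set.ncard_image_of_injOn ((rr_inj hα0).injOn)]
        calc T.ncard < S.ncard := Set.ncard_lt_ncard hTS hSfin
          _ = N := hcard
      obtain ⟨u', hu'ne, hu'eq⟩ := ih _ hS₂card S₂ rfl hS₂P hconv₂ hcocon₂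
      refine ⟨rr α u', ?_, ?_⟩
      · intro γ hγ
        rw [rr_adj]
        have hγR := K.PR hγ
        have hrγR : rr α γ ∈ K.R := K.reflR α hαR γ hγR
        rcases K.total _ hrγR with h | h
        · exact hu'ne _ h
        · have h' := hu'ne _ h
          rw [inner_neg_right] at h'
          intro h0
          exact h' (by rw [h0, neg_zero])
      · have huα : ⟪rr α u', α⟫ < 0 := by
          rw [rr_adj, rr_self hα0, inner_neg_right]
          have hne' := hu'ne α hαP
          have hnl : ¬ (⟪u', α⟫ < 0) := by
            intro hlt
            exact hαnotS₂ (by rw [hu'eq]; exact ⟨hαP, hlt⟩)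
          have : 0 < ⟪u', α⟫ := lt_of_le_of_ne (not_lt.mp hnl) (Ne.symm hne')
          linarith
        ext γ
        simp only [Set.mem_setOf_eq]
        constructor
        · intro hγS
          refine ⟨hSP hγS, ?_⟩
          by_cases h1 : γ = α
          · rw [h1]; exact huα
          by_cases h2 : γ = (2:ℝ) • α
          · rw [h2, real_inner_smul_right]; linarith
          · have hγT : γ ∈ T := memT.mpr ⟨hγS, h1, h2⟩
            have hγS₂ : rr α γ ∈ S₂ := ⟨γ, hγT, rfl⟩
            rw [hu'eq] at hγS₂
            rw [rr_adj]
            exact hγS₂.2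
        · rintro ⟨hγP, hγlt⟩
          by_cases h1 : γ = α
          · rw [h1]; exact hαS
          by_cases h2 : γ = (2:ℝ) • α
          · rw [h2]; exact h2αS (h2 ▸ hγP)
          · obtain ⟨hp, hna, hnb⟩ := K.stab hI hγP h1 h2
            have hmem2 : rr α γ ∈ S₂ := by
              rw [hu'eq]
              exact ⟨hp, by rw [← rr_adj]; exact hγlt⟩
            have hT' := memS₂.mp hmem2
            rw [rr_rr hα0] at hT'
            exact (memT.mp hT').1

end PosSystem


lemma inner_self_posB {x : V} (h : x ≠ 0) : 0 < ⟪x, x⟫ :=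
  lt_of_le_of_ne real_inner_self_nonneg (Ne.symm (inner_self_ne_zero.mpr h))

lemma coroot_inner_right (u α : V) : ⟪u, coroot α⟫ = (2 / ⟪α, α⟫) * ⟪u, α⟫ :=
  real_inner_smul_right _ _ _

lemma coroot_inner_left (α y : V) : ⟪coroot α, y⟫ = (2 / ⟪α, α⟫) * ⟪α, y⟫ :=
  real_inner_smul_left _ _ _

lemma coroot_self (α : V) (h : α ≠ 0) : ⟪coroot α, coroot α⟫ = 4 / ⟪α, α⟫ := by
  have := inner_self_posB h
  rw [coroot_inner_left, coroot_inner_right]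
  field_simp; ring

lemma coroot_coroot (α : V) (h : α ≠ 0) : coroot (coroot α) = α := by
  have h0 : ⟪α,α⟫ ≠ 0 := ne_of_gt (inner_self_posB h)
  rw [coroot, coroot_self α h, coroot, smul_smul]
  rw [show 2 / (4 / ⟪α,α⟫) * (2 / ⟪α,α⟫) = 1 by field_simp; ring]
  exact one_smul _ _

lemma coroot_neg (α : V) : coroot (-α) = - coroot α := by
  rw [coroot, coroot, inner_neg_neg, smul_neg]

lemma coroot_ne_zero (α : V) (h : α ≠ 0) : coroot α ≠ 0 := by
  have h0 := inner_self_posB h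
  rw [coroot]
  intro hc
  rcases smul_eq_zero.mp hc with hc | hc
  · rw [div_eq_zero_iff] at hc
    rcases hc with hc | hc
    · norm_num at hc
    · linarith
  · exact h hc

lemma coroot_reflect (α β : V) (hα : α ≠ 0) (hβ : β ≠ 0) :
    coroot β - (2 * ⟪coroot α, coroot β⟫ / ⟪coroot α, coroot α⟫) • coroot α
      = coroot (β - (2 * ⟪α, β⟫ / ⟪α, α⟫) • α) := by
  have ha := inner_self_posB hα
  have hb := inner_self_posB hβ
  have ha' : ⟪α,α⟫ ≠ 0 := ne_of_gt ha
  have hb' : ⟪β,β⟫ ≠ 0 := ne_of_gt hb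
  have hss : ⟪β - (2 * ⟪α, β⟫ / ⟪α, α⟫) • α, β - (2 * ⟪α, β⟫ / ⟪α, α⟫) • α⟫ = ⟪β, β⟫ := by
    simp only [inner_sub_left, inner_sub_right, real_inner_smul_left, real_inner_smul_right]
    rw [real_inner_comm β α]
    field_simp; ring
  simp only [coroot]
  simp only [real_inner_smul_left, real_inner_smul_right]
  rw [hss]
  match_scalars <;> field_simp <;> ring


lemma root_ne (RS : RootSystemData V) {α : V} (h : α ∈ RS.roots) : α ≠ 0 :=
  fun e => RS.zero_not_mem (e ▸ h)

lemma exists_dual_vec (Δ : Set V) (hfin : Δ.Finite)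
    (hind : LinearIndependent ℝ (fun s : Δ => (s : V))) :
    ∃ u0 : V, ∀ s ∈ Δ, ⟪u0, s⟫ = 1 := by
  classical
  haveI : Fintype ↥Δ := hfin.fintype
  set W := Submodule.span ℝ (Set.range (fun s : Δ => (s : V))) with hW
  haveI : FiniteDimensional ℝ W := FiniteDimensional.span_of_finite ℝ (Set.finite_range _)
  let b : Module.Basis ↥Δ ℝ W := Module.Basis.span hind
  let f : W →ₗ[ℝ] ℝ := ∑ s : ↥Δ, b.coord s
  haveI : CompleteSpace W := FiniteDimensional.complete ℝ W
  let u0W : W := (InnerProductSpace.toDual ℝ W).symm (LinearMap.toContinuousLinearMap f)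
  refine ⟨(u0W : V), ?_⟩
  intro s hs
  have hmem : (s : V) ∈ W := Submodule.subset_span ⟨⟨s, hs⟩, rfl⟩
  have h1 : ⟪(u0W : V), s⟫ = ⟪u0W, (⟨s, hmem⟩ : W)⟫ := rfl
  have h2 : (⟨s, hmem⟩ : W) = b ⟨s, hs⟩ := by
    apply Subtype.ext
    rw [Module.Basis.span_apply]
  rw [h1, h2]
  have h3 : ⟪u0W, b ⟨s, hs⟩⟫ = f (b ⟨s, hs⟩) :=
    InnerProductSpace.toDual_symm_apply
  rw [h3]
  simp only [f, LinearMap.coe_sum, Finset.sum_apply, Module.Basis.coord_apply, Module.Basis.repr_self]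
  rw [Finset.sum_eq_single (⟨s, hs⟩ : ↥Δ)]
  · simp
  · intro t _ hts; simp [Finsupp.single_apply, Ne.symm hts]
  · intro h; exact absurd (Finset.mem_univ _) h

lemma exists_u0 (RS : RootSystemData V) : ∃ u0 : V, ∀ α ∈ RS.pos, 0 < ⟪u0, α⟫ := by
  classical
  have hfin : RS.simple.Finite := RS.finite.subset (RS.simple_subset.trans RS.pos_subset)
  obtain ⟨u0, hu0⟩ := exists_dual_vec RS.simple hfin RS.simple_indep
  refine ⟨u0, ?_⟩
  intro α hα
  obtain ⟨c, hsupp, hsum⟩ := RS.pos_nat_comb α hα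
  have hα0 : α ≠ 0 := root_ne RS (RS.pos_subset hα)
  have hinner : ⟪u0, α⟫ = ∑ v ∈ c.support, (c v : ℝ) := by
    rw [hsum, Finsupp.sum, inner_sum]
    apply Finset.sum_congr rfl
    intro v hv
    rw [real_inner_smul_right, hu0 v (hsupp hv), mul_one]
  rw [hinner]
  have hne : c.support.Nonempty := by
    rcases Finset.eq_empty_or_nonempty c.support with h | h
    · exfalso
      exact hα0 (by rw [hsum, Finsupp.sum, h, Finset.sum_empty])
    · exact h
  apply Finset.sum_pos _ hne
  intro v hv
  have hv0 : c v ≠ 0 := Finsupp.mem_support_iff.mp hv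
  exact_mod_cast Nat.pos_of_ne_zero hv0

def mkPrimal (RS : RootSystemData V) (u0 : V) (hu0 : ∀ α ∈ RS.pos, 0 < ⟪u0, α⟫) :
    PosSystem V where
  R := RS.roots
  P := RS.pos
  u0 := u0
  finR := RS.finite
  zeroR := RS.zero_not_mem
  negR := RS.neg_mem
  crys := RS.crystallographic
  reflR := RS.reflect_mem
  PR := RS.pos_subset
  u0pos := hu0
  total := RS.pos_total

def mkDual (RS : RootSystemData V) (u0 : V) (hu0 : ∀ α ∈ RS.pos, 0 < ⟪u0, α⟫) :
    PosSystem V where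
  R := coroot '' RS.roots
  P := coroot '' RS.pos
  u0 := u0
  finR := RS.finite.image _
  zeroR := by
    rintro ⟨α, hα, h0⟩
    exact coroot_ne_zero α (root_ne RS hα) h0
  negR := by
    rintro x ⟨α, hα, rfl⟩
    exact ⟨-α, RS.neg_mem α hα, coroot_neg α⟩
  crys := by
    rintro x ⟨α, hα, rfl⟩ y ⟨β, hβ, rfl⟩
    obtain ⟨n, hn⟩ := RS.crystallographic β hβ α hα
    refine ⟨n, ?_⟩
    have ha := inner_self_posB (root_ne RS hα)
    have hb := inner_self_posB (root_ne RS hβ)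
    have ha' : ⟪α, α⟫ ≠ 0 := ne_of_gt ha
    have hb' : ⟪β, β⟫ ≠ 0 := ne_of_gt hb
    rw [coroot_inner_left, coroot_inner_right, coroot_self α (root_ne RS hα)]
    rw [← real_inner_comm β α] at hn
    field_simp
    linear_combination 4 * hn
  reflR := by
    rintro x ⟨α, hα, rfl⟩ y ⟨β, hβ, rfl⟩
    rw [coroot_reflect α β (root_ne RS hα) (root_ne RS hβ)]
    exact ⟨_, RS.reflect_mem α hα β hβ, rfl⟩
  PR := Set.image_mono RS.pos_subset
  u0pos := by
    rintro x ⟨α, hα, rfl⟩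
    rw [coroot_inner_right]
    have h1 := hu0 α hα
    have ha := inner_self_posB (root_ne RS (RS.pos_subset hα))
    exact mul_pos (div_pos two_pos ha) h1
  total := by
    rintro x ⟨α, hα, rfl⟩
    rcases RS.pos_total α hα with h | h
    · exact Or.inl ⟨α, h, rfl⟩
    · exact Or.inr ⟨-α, h, coroot_neg α⟩

lemma biconvex_of_cut (P S : Set V) (u : V) (h : S = {γ ∈ P | ⟪u, γ⟫ < 0}) :
    IsBiconvex P S := by
  subst h
  refine ⟨fun x hx => hx.1, ?_, ?_⟩
  · intro a b ha hb hab
    exact ⟨hab, by rw [inner_add_right]; linarith [ha.2, hb.2]⟩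
  · intro a b ha hb hab
    refine ⟨hab, ?_⟩
    rintro ⟨-, hlt⟩
    have h1 : 0 ≤ ⟪u, a⟫ := not_lt.mp (fun h' => ha.2 ⟨ha.1, h'⟩)
    have h2 : 0 ≤ ⟪u, b⟫ := not_lt.mp (fun h' => hb.2 ⟨hb.1, h'⟩)
    rw [inner_add_right] at hlt
    linarith

end BCD


/-- `S ⊆ R⁺` is biconvex in `R` iff the set of coroots `S̆` is biconvex in the
dual root system `R̆` (with positive roots `R̆⁺ = coroot '' R⁺`); moreover the hyperplane
arrangements `A(S)` and `A(S̆)` coincide. -/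
theorem biconvex_duality_coroots
    (RS : RootSystemData V) (S : Set V) (hS : S ⊆ RS.pos) :
    (IsBiconvex RS.pos S ↔ IsBiconvex (coroot '' RS.pos) (coroot '' S)) ∧
    ((fun α : V => {v : V | ⟪α, v⟫ = 0}) '' S
      = (fun α : V => {v : V | ⟪α, v⟫ = 0}) '' (coroot '' S)) := by
  classical
  constructor
  · obtain ⟨u0, hu0⟩ := BCD.exists_u0 RS
    constructor
    · rintro ⟨-, hconv, hcocon⟩
      obtain ⟨u, hune, heq⟩ :=
        (BCD.mkPrimal RS u0 hu0).exists_functional S.ncard S rfl hS hconv hcocon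
      apply BCD.biconvex_of_cut _ _ u
      ext x
      constructor
      · rintro ⟨β, hβ, rfl⟩
        have hβ0 : β ≠ 0 := BCD.root_ne RS (RS.pos_subset (hS hβ))
        have hb := BCD.inner_self_posB hβ0
        refine ⟨⟨β, hS hβ, rfl⟩, ?_⟩
        rw [BCD.coroot_inner_right]
        have hlt : ⟪u, β⟫ < 0 := by rw [heq] at hβ; exact hβ.2
        exact mul_neg_of_pos_of_neg (div_pos two_pos hb) hlt
      · rintro ⟨⟨β, hβpos, rfl⟩, hlt⟩
        have hβ0 : β ≠ 0 := BCD.root_ne RS (RS.pos_subset hβpos)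
        have hb := BCD.inner_self_posB hβ0
        refine ⟨β, ?_, rfl⟩
        rw [heq]
        refine ⟨hβpos, ?_⟩
        rw [BCD.coroot_inner_right] at hlt
        by_contra hge
        push_neg at hge
        have : 0 ≤ (2 / ⟪β, β⟫) * ⟪u, β⟫ :=
          mul_nonneg (le_of_lt (div_pos two_pos hb)) hge
        linarith
    · rintro ⟨-, hconv, hcocon⟩
      obtain ⟨u, hune, heq⟩ :=
        (BCD.mkDual RS u0 hu0).exists_functional (coroot '' S).ncard (coroot '' S) rfl
          (Set.image_mono hS) hconv hcocon
      apply BCD.biconvex_of_cut RS.pos S u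
      ext β
      constructor
      · intro hβ
        have hβpos := hS hβ
        have hβ0 : β ≠ 0 := BCD.root_ne RS (RS.pos_subset hβpos)
        have hb := BCD.inner_self_posB hβ0
        refine ⟨hβpos, ?_⟩
        have hmem : coroot β ∈ coroot '' S := ⟨β, hβ, rfl⟩
        rw [heq] at hmem
        have hlt := hmem.2
        rw [BCD.coroot_inner_right] at hlt
        by_contra hge
        push_neg at hge
        have : 0 ≤ (2 / ⟪β, β⟫) * ⟪u, β⟫ :=
          mul_nonneg (le_of_lt (div_pos two_pos hb)) hge
        linarith
      · rintro ⟨hβpos, hlt⟩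
        have hβ0 : β ≠ 0 := BCD.root_ne RS (RS.pos_subset hβpos)
        have hb := BCD.inner_self_posB hβ0
        have hmem : coroot β ∈ coroot '' S := by
          rw [heq]
          refine ⟨⟨β, hβpos, rfl⟩, ?_⟩
          rw [BCD.coroot_inner_right]
          exact mul_neg_of_pos_of_neg (div_pos two_pos hb) hlt
        obtain ⟨δ, hδ, hδe⟩ := hmem
        have hδ0 : δ ≠ 0 := BCD.root_ne RS (RS.pos_subset (hS hδ))
        have hδβ : δ = β := by
          have hc := congrArg coroot hδe
          rwa [BCD.coroot_coroot δ hδ0, BCD.coroot_coroot β hβ0] at hc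
        rwa [← hδβ]
  · rw [Set.image_image]
    apply Set.image_congr
    intro β hβ
    have hβ0 : β ≠ 0 := BCD.root_ne RS (RS.pos_subset (hS hβ))
    have hb := BCD.inner_self_posB hβ0
    have h2b : (2:ℝ) / ⟪β, β⟫ ≠ 0 := ne_of_gt (div_pos two_pos hb)
    ext v
    simp only [Set.mem_setOf_eq]
    rw [BCD.coroot_inner_left]
    constructor
    · intro h; rw [h, mul_zero]
    · intro h
      rcases mul_eq_zero.mp h with h' | h'
      · exact absurd h' h2b
      · exact h'
end
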